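/- arXiv:2004.08823 — 10 statements merged into one kernel-verified Lean document; each statement's English description precedes it below -/
import Mathlib

section
/- Let (g, [·,·]) be a Lie superalgebra and α, β : g → g two even algebra homomorphisms with α∘β = β∘α. Define a new bracket [x,y]_{α,β} = [α(x), β(y)]. Then (g, [·,·]_{α,β}, α, β) is a BiHom-Lie superalgebra. -/
/-- A BiHom-Lie superalgebra structure on a ℤ₂-graded vector space, given by a grading
`G`, an even bilinear bracket `br` and two even commuting multiplicative endomorphisms. -/
structure IsBiHomLieSuper (𝕜 : Type*) [Field 𝕜] {V : Type*} [AddCommGroup V] [Module 𝕜 V]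
    (G : ZMod 2 → Submodule 𝕜 V) (br : V → V → V) (α β : V →ₗ[𝕜] V) : Prop where
  sup_top : G 0 ⊔ G 1 = ⊤
  inf_bot : G 0 ⊓ G 1 = ⊥
  add₁ : ∀ x x' y : V, br (x + x') y = br x y + br x' y
  smul₁ : ∀ (c : 𝕜) (x y : V), br (c • x) y = c • br x y
  add₂ : ∀ x y y' : V, br x (y + y') = br x y + br x y'
  smul₂ : ∀ (c : 𝕜) (x y : V), br x (c • y) = c • br x y
  α_even : ∀ i, ∀ x ∈ G i, α x ∈ G i
  β_even : ∀ i, ∀ x ∈ G i, β x ∈ G i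
  br_grade : ∀ i j, ∀ x ∈ G i, ∀ y ∈ G j, br x y ∈ G (i + j)
  comm : ∀ x, α (β x) = β (α x)
  mult_α : ∀ x y, α (br x y) = br (α x) (α y)
  mult_β : ∀ x y, β (br x y) = br (β x) (β y)
  skew : ∀ (i j : ZMod 2), ∀ x ∈ G i, ∀ y ∈ G j,
    br (β x) (α y) = -((-1 : 𝕜) ^ (i.val * j.val)) • br (β y) (α x)
  jacobi : ∀ (i j k : ZMod 2), ∀ x ∈ G i, ∀ y ∈ G j, ∀ z ∈ G k,
    (-1 : 𝕜) ^ (i.val * k.val) • br (β (β x)) (br (β y) (α z)) +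
    (-1 : 𝕜) ^ (j.val * i.val) • br (β (β y)) (br (β z) (α x)) +
    (-1 : 𝕜) ^ (k.val * j.val) • br (β (β z)) (br (β x) (α y)) = 0

/-- Theorem (induced BiHom-Lie superalgebra): if `(g,[·,·])` is a Lie superalgebra
(i.e. a BiHom-Lie superalgebra with `α = β = id`) and `α, β` are even commuting algebra
homomorphisms, then `[x,y]_{α,β} := [α x, β y]` makes `(g, [·,·]_{α,β}, α, β)` a
BiHom-Lie superalgebra. -/
theorem statement0 {𝕜 V : Type*} [Field 𝕜] [AddCommGroup V] [Module 𝕜 V]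
    (G : ZMod 2 → Submodule 𝕜 V) (br : V → V → V)
    (hLie : IsBiHomLieSuper 𝕜 G br (LinearMap.id : V →ₗ[𝕜] V) LinearMap.id)
    (α β : V →ₗ[𝕜] V)
    (hαe : ∀ i, ∀ x ∈ G i, α x ∈ G i) (hβe : ∀ i, ∀ x ∈ G i, β x ∈ G i)
    (hαm : ∀ x y, α (br x y) = br (α x) (α y))
    (hβm : ∀ x y, β (br x y) = br (β x) (β y))
    (hcomm : ∀ x, α (β x) = β (α x)) :
    IsBiHomLieSuper 𝕜 G (fun x y => br (α x) (β y)) α β := by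
  obtain ⟨hsup, hinf, ha1, hs1, ha2, hs2, _, _, hgr, _, _, _, hskew, hjac⟩ := hLie
  simp only [LinearMap.id_apply] at hskew hjac
  refine ⟨hsup, hinf, ?_, ?_, ?_, ?_, hαe, hβe, ?_, hcomm, ?_, ?_, ?_, ?_⟩
  · intro x x' y; rw [map_add, ha1]
  · intro c x y; rw [map_smul, hs1]
  · intro x y y'; rw [map_add, ha2]
  · intro c x y; rw [map_smul, hs2]
  · intro i j x hx y hy; exact hgr i j _ (hαe i x hx) _ (hβe j y hy)
  · intro x y; rw [hαm, hcomm]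
  · intro x y; rw [hβm, ← hcomm]
  · intro i j x hx y hy
    simp only [hcomm]
    exact hskew i j _ (hβe i _ (hαe i x hx)) _ (hβe j _ (hαe j y hy))
  · intro i j k x hx y hy z hz
    simp only [hβm, ← hcomm]
    exact hjac i j k _ (hαe i _ (hβe i _ (hβe i x hx)))
      _ (hαe j _ (hβe j _ (hβe j y hy))) _ (hαe k _ (hβe k _ (hβe k z hz)))
end

section
/- Let (g, [·,·,·]) be a 3-Lie superalgebra and α, β : g → g two even algebra homomorphisms with α∘β = β∘α. Define [x,y,z]_{α,β} = [α(x), α(y), β(z)]. Then (g, [·,·,·]_{α,β}, α, β) is a 3-BiHom-Lie superalgebra. -/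
structure Is3BiHomLieSuper (𝕜 : Type*) [Field 𝕜] {V : Type*} [AddCommGroup V] [Module 𝕜 V]
    (G : ZMod 2 → Submodule 𝕜 V) (br : V → V → V → V) (α β : V →ₗ[𝕜] V) : Prop where
  sup_top : G 0 ⊔ G 1 = ⊤
  inf_bot : G 0 ⊓ G 1 = ⊥
  add₁ : ∀ x x' y z : V, br (x + x') y z = br x y z + br x' y z
  smul₁ : ∀ (c : 𝕜) (x y z : V), br (c • x) y z = c • br x y z
  add₂ : ∀ x y y' z : V, br x (y + y') z = br x y z + br x y' z
  smul₂ : ∀ (c : 𝕜) (x y z : V), br x (c • y) z = c • br x y z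
  add₃ : ∀ x y z z' : V, br x y (z + z') = br x y z + br x y z'
  smul₃ : ∀ (c : 𝕜) (x y z : V), br x y (c • z) = c • br x y z
  α_even : ∀ i, ∀ x ∈ G i, α x ∈ G i
  β_even : ∀ i, ∀ x ∈ G i, β x ∈ G i
  br_grade : ∀ i j k, ∀ x ∈ G i, ∀ y ∈ G j, ∀ z ∈ G k, br x y z ∈ G (i + j + k)
  comm : ∀ x, α (β x) = β (α x)
  mult_α : ∀ x y z, α (br x y z) = br (α x) (α y) (α z)
  mult_β : ∀ x y z, β (br x y z) = br (β x) (β y) (β z)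
  skew₁ : ∀ (i j : ZMod 2), ∀ x ∈ G i, ∀ y ∈ G j, ∀ z : V,
    br (β x) (β y) (α z) = -((-1 : 𝕜) ^ (i.val * j.val)) • br (β y) (β x) (α z)
  skew₂ : ∀ (j k : ZMod 2), ∀ y ∈ G j, ∀ z ∈ G k, ∀ x : V,
    br (β x) (β y) (α z) = -((-1 : 𝕜) ^ (j.val * k.val)) • br (β x) (β z) (α y)
  jacobi : ∀ (ix iy iz iu iv : ZMod 2), ∀ x ∈ G ix, ∀ y ∈ G iy, ∀ z ∈ G iz, ∀ u ∈ G iu, ∀ v ∈ G iv,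
    br (β (β x)) (β (β y)) (br (β z) (β u) (α v)) =
      (-1 : 𝕜) ^ ((iu.val + iv.val) * (ix.val + iy.val + iz.val)) •
        br (β (β u)) (β (β v)) (br (β x) (β y) (α z)) -
      (-1 : 𝕜) ^ ((iz.val + iv.val) * (ix.val + iy.val) + iu.val * iv.val) •
        br (β (β z)) (β (β v)) (br (β x) (β y) (α u)) +
      (-1 : 𝕜) ^ ((iz.val + iu.val) * (ix.val + iy.val)) •
        br (β (β z)) (β (β u)) (br (β x) (β y) (α v))

/-- If `(g,[·,·,·])` is a 3-Lie superalgebra (a 3-BiHom-Lie superalgebra with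
`α = β = id`) and `α, β` are even commuting algebra homomorphisms, then
`[x,y,z]_{α,β} := [α x, α y, β z]` yields a 3-BiHom-Lie superalgebra `(g,[·,·,·]_{α,β},α,β)`. -/
theorem statement1 {𝕜 V : Type*} [Field 𝕜] [AddCommGroup V] [Module 𝕜 V]
    (G : ZMod 2 → Submodule 𝕜 V) (br : V → V → V → V)
    (hLie : Is3BiHomLieSuper 𝕜 G br (LinearMap.id : V →ₗ[𝕜] V) LinearMap.id)
    (α β : V →ₗ[𝕜] V)
    (hαe : ∀ i, ∀ x ∈ G i, α x ∈ G i) (hβe : ∀ i, ∀ x ∈ G i, β x ∈ G i)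
    (hαm : ∀ x y z, α (br x y z) = br (α x) (α y) (α z))
    (hβm : ∀ x y z, β (br x y z) = br (β x) (β y) (β z))
    (hcomm : ∀ x, α (β x) = β (α x)) :
    Is3BiHomLieSuper 𝕜 G (fun x y z => br (α x) (α y) (β z)) α β := by
  obtain ⟨h1, h2, ha1, hs1, ha2, hs2, ha3, hs3, _, _, hg, _, _, _, hsk1, hsk2, hjac⟩ := hLie
  simp only [LinearMap.id_coe, id_eq] at hsk1 hsk2 hjac
  constructor
  · exact h1
  · exact h2
  · intro x x' y z; simp only [map_add, ha1]
  · intro c x y z; simp only [map_smul, hs1]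
  · intro x y y' z; simp only [map_add, ha2]
  · intro c x y z; simp only [map_smul, hs2]
  · intro x y z z'; simp only [map_add, ha3]
  · intro c x y z; simp only [map_smul, hs3]
  · exact hαe
  · exact hβe
  · intro i j k x hx y hy z hz
    exact hg i j k _ (hαe i x hx) _ (hαe j y hy) _ (hβe k z hz)
  · exact hcomm
  · intro x y z
    simp only [hαm, hcomm]
  · intro x y z
    simp only [hβm, hcomm]
  · intro i j x hx y hy z
    simp only [hcomm]
    exact hsk1 i j _ (hβe i _ (hαe i x hx)) _ (hβe j _ (hαe j y hy)) _
  · intro j k y hy z hz x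
    simp only [hcomm]
    exact hsk2 j k _ (hβe j _ (hαe j y hy)) _ (hβe k _ (hαe k z hz)) _
  · intro ix iy iz iu iv x hx y hy z hz u hu v hv
    simp only [hβm, hcomm]
    exact hjac ix iy iz iu iv _ (hβe ix _ (hβe ix _ (hαe ix x hx)))
      _ (hβe iy _ (hβe iy _ (hαe iy y hy)))
      _ (hβe iz _ (hβe iz _ (hαe iz z hz)))
      _ (hβe iu _ (hβe iu _ (hαe iu u hu)))
      _ (hβe iv _ (hβe iv _ (hαe iv v hv)))
end

section
/- Let (g, [·,·,·], α, β) be a 3-BiHom-Lie superalgebra, and α', β' : g → g two even commuting algebra homomorphisms such that any two of the maps α, β, α', β' commute. Then (g, [·,·,·]_{α',β'}, α∘α', β∘β') is a 3-BiHom-Lie superalgebra, where [x,y,z]_{α',β'} = [α'(x), α'(y), β'(z)]. -/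
/-- Let `(g,[·,·,·],α,β)` be a 3-BiHom-Lie superalgebra and `α', β'` two even commuting
algebra homomorphisms such that any two of `α, β, α', β'` commute.  Then
`(g, [·,·,·]∘(α'⊗α'⊗β'), α∘α', β∘β')` is a 3-BiHom-Lie superalgebra. -/
theorem statement2 {𝕜 V : Type*} [Field 𝕜] [AddCommGroup V] [Module 𝕜 V]
    (G : ZMod 2 → Submodule 𝕜 V) (br : V → V → V → V) (α β α' β' : V →ₗ[𝕜] V)
    (halg : Is3BiHomLieSuper 𝕜 G br α β)
    (hα'e : ∀ i, ∀ x ∈ G i, α' x ∈ G i) (hβ'e : ∀ i, ∀ x ∈ G i, β' x ∈ G i)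
    (hα'm : ∀ x y z, α' (br x y z) = br (α' x) (α' y) (α' z))
    (hβ'm : ∀ x y z, β' (br x y z) = br (β' x) (β' y) (β' z))
    (hα'β' : ∀ x, α' (β' x) = β' (α' x))
    (hαα' : ∀ x, α (α' x) = α' (α x))
    (hαβ' : ∀ x, α (β' x) = β' (α x))
    (hβα' : ∀ x, β (α' x) = α' (β x))
    (hββ' : ∀ x, β (β' x) = β' (β x)) :
    Is3BiHomLieSuper 𝕜 G (fun x y z => br (α' x) (α' y) (β' z)) (α ∘ₗ α') (β ∘ₗ β') := by
  obtain ⟨sup_top, inf_bot, add₁, smul₁, add₂, smul₂, add₃, smul₃, αe, βe, brg, comm,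
    mα, mβ, sk₁, sk₂, jac⟩ := halg
  have n1 : ∀ x, α' (β x) = β (α' x) := fun x => (hβα' x).symm
  have n2 : ∀ x, β' (β x) = β (β' x) := fun x => (hββ' x).symm
  have n3 : ∀ x, α' (α x) = α (α' x) := fun x => (hαα' x).symm
  have n4 : ∀ x, β' (α x) = α (β' x) := fun x => (hαβ' x).symm
  have n5 : ∀ x, α (β x) = β (α x) := comm
  have n6 : ∀ x, β' (α' x) = α' (β' x) := fun x => (hα'β' x).symm
  have mem1 : ∀ i, ∀ w, w ∈ G i → α' (β' w) ∈ G i :=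
    fun i w h => hα'e i _ (hβ'e i w h)
  have mem2 : ∀ i, ∀ w, w ∈ G i → α' (β' (β' w)) ∈ G i :=
    fun i w h => hα'e i _ (hβ'e i _ (hβ'e i w h))
  refine ⟨sup_top, inf_bot, ?_, ?_, ?_, ?_, ?_, ?_, ?_, ?_, ?_, ?_, ?_, ?_, ?_, ?_, ?_⟩
  · intro x x' y z; simp [add₁]
  · intro c x y z; simp [smul₁]
  · intro x y y' z; simp [add₂]
  · intro c x y z; simp [smul₂]
  · intro x y z z'; simp [add₃]
  · intro c x y z; simp [smul₃]
  · intro i x hx; exact αe i _ (hα'e i x hx)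
  · intro i x hx; exact βe i _ (hβ'e i x hx)
  · intro i j k x hx y hy z hz
    exact brg i j k _ (hα'e i x hx) _ (hα'e j y hy) _ (hβ'e k z hz)
  · intro x; simp only [LinearMap.comp_apply, n1, n2, n3, n4, n5, n6]
  · intro x y z
    simp only [LinearMap.comp_apply, hα'm, hβ'm, mα, mβ, n1, n2, n3, n4, n5, n6]
  · intro x y z
    simp only [LinearMap.comp_apply, hα'm, hβ'm, mα, mβ, n1, n2, n3, n4, n5, n6]
  · intro i j x hx y hy z
    simp only [LinearMap.comp_apply, n1, n2, n3, n4, n5, n6]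
    exact sk₁ i j _ (mem1 i x hx) _ (mem1 j y hy) (α' (β' z))
  · intro j k y hy z hz x
    simp only [LinearMap.comp_apply, n1, n2, n3, n4, n5, n6]
    exact sk₂ j k _ (mem1 j y hy) _ (mem1 k z hz) (α' (β' x))
  · intro ix iy iz iu iv x hx y hy z hz u hu v hv
    simp only [LinearMap.comp_apply, hα'm, hβ'm, n1, n2, n3, n4, n5, n6]
    exact jac ix iy iz iu iv _ (mem2 ix x hx) _ (mem2 iy y hy) _ (mem2 iz z hz)
      _ (mem2 iu u hu) _ (mem2 iv v hv)
end

section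
/- Let (g, [·,·,·], α, β) be a 3-BiHom-Lie superalgebra and k ≥ 0 an integer. Then (g, [·,·,·]_k, α^{k+1}, β^{k+1}) is a 3-BiHom-Lie superalgebra, where [x,y,z]_k = [α^k(x), α^k(y), β^k(z)]. -/
/-- For a 3-BiHom-Lie superalgebra `(g,[·,·,·],α,β)` and `k ≥ 0`,
`(g, [·,·,·]_k := [·,·,·]∘(α^k⊗α^k⊗β^k), α^{k+1}, β^{k+1})` is a 3-BiHom-Lie superalgebra. -/
theorem statement3 {𝕜 V : Type*} [Field 𝕜] [AddCommGroup V] [Module 𝕜 V]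
    (G : ZMod 2 → Submodule 𝕜 V) (br : V → V → V → V) (α β : Module.End 𝕜 V)
    (halg : Is3BiHomLieSuper 𝕜 G br α β) (k : ℕ) :
    Is3BiHomLieSuper 𝕜 G (fun x y z => br ((α ^ k) x) ((α ^ k) y) ((β ^ k) z))
      (α ^ (k + 1)) (β ^ (k + 1)) := by
  have hc : Commute α β := LinearMap.ext halg.comm
  have key : ∀ (m n : ℕ) (x : V), (α ^ m) ((β ^ n) x) = (β ^ n) ((α ^ m) x) := fun m n x => by
    simpa [Module.End.mul_apply] using LinearMap.congr_fun (hc.pow_pow m n) x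
  have hβ1 : ∀ x : V, (β ^ (k + 1)) x = β ((β ^ k) x) := fun x => by
    rw [pow_succ' β k]; rfl
  have hα1 : ∀ x : V, (α ^ (k + 1)) x = α ((α ^ k) x) := fun x => by
    rw [pow_succ' α k]; rfl
  have hββ : ∀ x : V, (β ^ k) (β x) = β ((β ^ k) x) := fun x => by
    rw [← Module.End.mul_apply, ← pow_succ, pow_succ' β k]; rfl
  have hαα : ∀ x : V, (α ^ k) (α x) = α ((α ^ k) x) := fun x => by
    rw [← Module.End.mul_apply, ← pow_succ, pow_succ' α k]; rfl
  have hαβ : ∀ x : V, (α ^ k) (β x) = β ((α ^ k) x) := fun x => by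
    simpa using key k 1 x
  have hβα : ∀ x : V, (β ^ k) (α x) = α ((β ^ k) x) := fun x => by
    simpa using (key 1 k x).symm
  have hkk : ∀ x : V, (β ^ k) ((α ^ k) x) = (α ^ k) ((β ^ k) x) := fun x => (key k k x).symm
  have multα : ∀ (n : ℕ) (x y z : V),
      (α ^ n) (br x y z) = br ((α ^ n) x) ((α ^ n) y) ((α ^ n) z) := by
    intro n
    induction n with
    | zero => intro x y z; simp
    | succ n ih =>
      intro x y z
      rw [pow_succ]
      simp only [Module.End.mul_apply]
      rw [halg.mult_α, ih]
  have multβ : ∀ (n : ℕ) (x y z : V),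
      (β ^ n) (br x y z) = br ((β ^ n) x) ((β ^ n) y) ((β ^ n) z) := by
    intro n
    induction n with
    | zero => intro x y z; simp
    | succ n ih =>
      intro x y z
      rw [pow_succ]
      simp only [Module.End.mul_apply]
      rw [halg.mult_β, ih]
  have memα : ∀ (n : ℕ) (i : ZMod 2), ∀ x ∈ G i, (α ^ n) x ∈ G i := by
    intro n
    induction n with
    | zero => intro i x hx; simpa using hx
    | succ n ih =>
      intro i x hx
      rw [pow_succ]
      exact ih i (α x) (halg.α_even i x hx)
  have memβ : ∀ (n : ℕ) (i : ZMod 2), ∀ x ∈ G i, (β ^ n) x ∈ G i := by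
    intro n
    induction n with
    | zero => intro i x hx; simpa using hx
    | succ n ih =>
      intro i x hx
      rw [pow_succ]
      exact ih i (β x) (halg.β_even i x hx)
  refine
    { sup_top := halg.sup_top
      inf_bot := halg.inf_bot
      add₁ := by intro x x' y z; simp [map_add, halg.add₁]
      smul₁ := by intro c x y z; simp [map_smul, halg.smul₁]
      add₂ := by intro x y y' z; simp [map_add, halg.add₂]
      smul₂ := by intro c x y z; simp [map_smul, halg.smul₂]
      add₃ := by intro x y z z'; simp [map_add, halg.add₃]
      smul₃ := by intro c x y z; simp [map_smul, halg.smul₃]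
      α_even := fun i x hx => memα (k + 1) i x hx
      β_even := fun i x hx => memβ (k + 1) i x hx
      br_grade := fun i j l x hx y hy z hz =>
        halg.br_grade i j l _ (memα k i x hx) _ (memα k j y hy) _ (memβ k l z hz)
      comm := fun x => key (k + 1) (k + 1) x
      mult_α := by
        intro x y z
        simp only [multα (k + 1), hα1, hαα, hβα, hkk]
      mult_β := by
        intro x y z
        simp only [multβ (k + 1), hβ1, hββ, hαβ, hkk]
      skew₁ := by
        intro i j x hx y hy z
        simp only [hβ1, hα1, hαβ, hβα, hββ, hαα, hkk]
        exact halg.skew₁ i j _ (memα k i _ (memβ k i x hx)) _ (memα k j _ (memβ k j y hy)) _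
      skew₂ := by
        intro j l y hy z hz x
        simp only [hβ1, hα1, hαβ, hβα, hββ, hαα, hkk]
        exact halg.skew₂ j l _ (memα k j _ (memβ k j y hy)) _ (memα k l _ (memβ k l z hz)) _
      jacobi := by
        intro ix iy iz iu iv x hx y hy z hz u hu v hv
        simp only [multβ k, hβ1, hα1, hαβ, hβα, hββ, hαα, hkk]
        exact halg.jacobi ix iy iz iu iv
          _ (memα k ix _ (memβ k ix _ (memβ k ix x hx)))
          _ (memα k iy _ (memβ k iy _ (memβ k iy y hy)))
          _ (memα k iz _ (memβ k iz _ (memβ k iz z hz)))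
          _ (memα k iu _ (memβ k iu _ (memβ k iu u hu)))
          _ (memα k iv _ (memβ k iv _ (memβ k iv v hv))) }
end

section
/- Let (g, [·,·,·], α, β) be a regular 3-BiHom-Lie superalgebra and u₁, u₂ ∈ g homogeneous elements with α(u₁) = β(u₁) = u₁ and α(u₂) = β(u₂) = u₂. Define D_{r,s}(u₁,u₂)(w) = [u₁, u₂, α^r β^s(w)]. Then D_{r,s}(u₁,u₂) is an (α^r β^{s+1})-derivation of g. -/
private lemma neg_one_pow_congr' {𝕜 : Type*} [Field 𝕜] {m n : ℕ} (h : m % 2 = n % 2) :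
    ((-1 : 𝕜)) ^ m = (-1) ^ n := by
  conv_lhs => rw [← Nat.div_add_mod m 2, pow_add, pow_mul, neg_one_sq, one_pow, one_mul]
  conv_rhs => rw [← Nat.div_add_mod n 2, pow_add, pow_mul, neg_one_sq, one_pow, one_mul]
  rw [h]

private lemma smul_eq_self_of_one {𝕜 M : Type*} [Field 𝕜] [AddCommGroup M] [Module 𝕜 M]
    {c : 𝕜} (h : c = 1) (v : M) : c • v = v := by rw [h, one_smul]

private lemma smul_congr_coef {𝕜 M : Type*} [Field 𝕜] [AddCommGroup M] [Module 𝕜 M]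
    {c d : 𝕜} (h : c = d) (v : M) : c • v = d • v := by rw [h]

set_option maxHeartbeats 1600000 in
/-- For a regular 3-BiHom-Lie superalgebra and homogeneous `u₁, u₂` fixed by `α` and `β`,
the map `D_{r,s}(u₁,u₂) : w ↦ [u₁, u₂, α^r β^s(w)]` is an `(α^r β^{s+1})`-derivation:
it commutes with `α` and `β` and satisfies the twisted super-Leibniz rule with twist
`α^r β^{s+1}` and parity `|u₁| + |u₂|`. -/
theorem statement7 {𝕜 V : Type*} [Field 𝕜] [AddCommGroup V] [Module 𝕜 V]
    (G : ZMod 2 → Submodule 𝕜 V) (br : V → V → V → V) (α β : Module.End 𝕜 V)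
    (halg : Is3BiHomLieSuper 𝕜 G br α β)
    (hαbij : Function.Bijective α) (hβbij : Function.Bijective β)
    (r s : ℕ) (i₁ i₂ : ZMod 2) (u₁ u₂ : V) (hu₁ : u₁ ∈ G i₁) (hu₂ : u₂ ∈ G i₂)
    (hαu₁ : α u₁ = u₁) (hβu₁ : β u₁ = u₁) (hαu₂ : α u₂ = u₂) (hβu₂ : β u₂ = u₂) :
    (∀ w, br u₁ u₂ ((α ^ r * β ^ s) (α w)) = α (br u₁ u₂ ((α ^ r * β ^ s) w))) ∧
    (∀ w, br u₁ u₂ ((α ^ r * β ^ s) (β w)) = β (br u₁ u₂ ((α ^ r * β ^ s) w))) ∧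
    (∀ (jx jy : ZMod 2), ∀ x ∈ G jx, ∀ y ∈ G jy, ∀ z : V,
      br u₁ u₂ ((α ^ r * β ^ s) (br x y z)) =
        br (br u₁ u₂ ((α ^ r * β ^ s) x)) ((α ^ r * β ^ (s + 1)) y) ((α ^ r * β ^ (s + 1)) z) +
        (-1 : 𝕜) ^ (jx.val * (i₁.val + i₂.val)) •
          br ((α ^ r * β ^ (s + 1)) x) (br u₁ u₂ ((α ^ r * β ^ s) y)) ((α ^ r * β ^ (s + 1)) z) +
        (-1 : 𝕜) ^ ((jx.val + jy.val) * (i₁.val + i₂.val)) •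
          br ((α ^ r * β ^ (s + 1)) x) ((α ^ r * β ^ (s + 1)) y)
            (br u₁ u₂ ((α ^ r * β ^ s) z))) := by
  obtain ⟨hsup, hinf, add₁, smul₁, add₂, smul₂, add₃, smul₃, αev, βev, brg, hco, multα, multβ,
    sk₁, sk₂, jac⟩ := halg
  -- inverses
  let ai : V → V := Function.invFun ⇑α
  let bi : V → V := Function.invFun ⇑β
  have haa : ∀ v, α (ai v) = v := fun v => Function.rightInverse_invFun hαbij.2 v
  have hbb : ∀ v, β (bi v) = v := fun v => Function.rightInverse_invFun hβbij.2 v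
  -- commutation facts
  have hcc : Commute α β := LinearMap.ext fun x => hco x
  have hcE1 : Commute (α ^ r * β ^ s) α :=
    Commute.mul_left ((Commute.refl α).pow_left r) (hcc.symm.pow_left s)
  have hcE2 : Commute (α ^ r * β ^ s) β :=
    Commute.mul_left (hcc.pow_left r) ((Commute.refl β).pow_left s)
  have hEα : ∀ w, (α ^ r * β ^ s) (α w) = α ((α ^ r * β ^ s) w) := fun w =>
    DFunLike.congr_fun hcE1 w
  have hEβ : ∀ w, (α ^ r * β ^ s) (β w) = β ((α ^ r * β ^ s) w) := fun w =>
    DFunLike.congr_fun hcE2 w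
  have hTco : (α ^ r * β ^ (s + 1) : Module.End 𝕜 V) = β * (α ^ r * β ^ s) := by
    rw [pow_succ', ← mul_assoc, ← mul_assoc, (hcc.symm.pow_right r).eq]
  have hT : ∀ w, (α ^ r * β ^ (s + 1)) w = β ((α ^ r * β ^ s) w) := fun w => by
    rw [hTco]; rfl
  -- D commutes with α, β pointwise
  have hDα : ∀ v, α (br u₁ u₂ v) = br u₁ u₂ (α v) := fun v => by
    rw [multα, hαu₁, hαu₂]
  have hDβ : ∀ v, β (br u₁ u₂ v) = br u₁ u₂ (β v) := fun v => by
    rw [multβ, hβu₁, hβu₂]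
  refine ⟨fun w => by rw [hEα, ← hDα], fun w => by rw [hEβ, ← hDβ], ?_⟩
  -- multiplicativity of powers
  have multβpow : ∀ n x y z, (β ^ n) (br x y z) = br ((β ^ n) x) ((β ^ n) y) ((β ^ n) z) := by
    intro n
    induction n with
    | zero => intro x y z; simp
    | succ n ih =>
      intro x y z
      rw [pow_succ]
      simp only [Module.End.mul_apply]
      rw [multβ, ih]
  have multαpow : ∀ n x y z, (α ^ n) (br x y z) = br ((α ^ n) x) ((α ^ n) y) ((α ^ n) z) := by
    intro n
    induction n with
    | zero => intro x y z; simp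
    | succ n ih =>
      intro x y z
      rw [pow_succ]
      simp only [Module.End.mul_apply]
      rw [multα, ih]
  have multE : ∀ x y z, (α ^ r * β ^ s) (br x y z) =
      br ((α ^ r * β ^ s) x) ((α ^ r * β ^ s) y) ((α ^ r * β ^ s) z) := by
    intro x y z
    simp only [Module.End.mul_apply]
    rw [multβpow, multαpow]
  -- grading of powers
  have gradeβpow : ∀ n i, ∀ v ∈ G i, (β ^ n) v ∈ G i := by
    intro n
    induction n with
    | zero => intro i v hv; simpa using hv
    | succ n ih =>
      intro i v hv
      rw [pow_succ]
      simp only [Module.End.mul_apply]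
      exact ih i _ (βev i v hv)
  have gradeαpow : ∀ n i, ∀ v ∈ G i, (α ^ n) v ∈ G i := by
    intro n
    induction n with
    | zero => intro i v hv; simpa using hv
    | succ n ih =>
      intro i v hv
      rw [pow_succ]
      simp only [Module.End.mul_apply]
      exact ih i _ (αev i v hv)
  have gradeE : ∀ i, ∀ v ∈ G i, (α ^ r * β ^ s) v ∈ G i := by
    intro i v hv
    simp only [Module.End.mul_apply]
    exact gradeαpow r i _ (gradeβpow s i v hv)
  -- gradings of inverses
  have h01 : ∀ i : ZMod 2, i = 0 ∨ i = 1 := by decide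
  have gradeInv : ∀ (f : Module.End 𝕜 V) (hf : Function.Bijective f),
      (∀ i, ∀ x ∈ G i, f x ∈ G i) → ∀ i, ∀ v ∈ G i, Function.invFun ⇑f v ∈ G i := by
    intro f hf hev i v hv
    have hfv : f (Function.invFun ⇑f v) = v := Function.rightInverse_invFun hf.2 v
    have hmem : Function.invFun ⇑f v ∈ G 0 ⊔ G 1 := by rw [hsup]; trivial
    rcases Submodule.mem_sup.1 hmem with ⟨a, ha, b, hb, hab⟩
    have hfa := hev 0 a ha
    have hfb := hev 1 b hb
    have hv' : f a + f b = v := by rw [← map_add, hab, hfv]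
    rcases h01 i with hi | hi
    · subst hi
      have hb1 : f b ∈ G 0 := by
        have hfb' : f b = v - f a := by rw [← hv']; abel
        rw [hfb']; exact sub_mem hv hfa
      have hbbot : f b ∈ G 0 ⊓ G 1 := ⟨hb1, hfb⟩
      rw [hinf, Submodule.mem_bot] at hbbot
      have hb0 : b = 0 := hf.1 (by rw [hbbot, map_zero])
      rw [← hab, hb0, add_zero]; exact ha
    · subst hi
      have ha1 : f a ∈ G 1 := by
        have hfa' : f a = v - f b := by rw [← hv']; abel
        rw [hfa']; exact sub_mem hv hfb
      have habot : f a ∈ G 0 ⊓ G 1 := ⟨hfa, ha1⟩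
      rw [hinf, Submodule.mem_bot] at habot
      have ha0 : a = 0 := hf.1 (by rw [habot, map_zero])
      rw [← hab, ha0, zero_add]; exact hb
  -- the key D-through-(α∘β⁻¹) identity
  have habi : ∀ w, br u₁ u₂ (α (bi w)) = α (bi (br u₁ u₂ w)) := by
    intro w
    have h1 : β (br u₁ u₂ (bi w)) = br u₁ u₂ w := by rw [multβ, hβu₁, hβu₂, hbb]
    have h2 : bi (br u₁ u₂ w) = br u₁ u₂ (bi w) := hβbij.1 (by rw [hbb]; exact h1.symm)
    rw [h2, hDα]
  -- the homogeneous key lemma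
  have key : ∀ (jx jy jz : ZMod 2), ∀ x ∈ G jx, ∀ y ∈ G jy, ∀ z ∈ G jz,
      br u₁ u₂ ((α ^ r * β ^ s) (br x y z)) =
        br (br u₁ u₂ ((α ^ r * β ^ s) x)) ((α ^ r * β ^ (s + 1)) y) ((α ^ r * β ^ (s + 1)) z) +
        (-1 : 𝕜) ^ (jx.val * (i₁.val + i₂.val)) •
          br ((α ^ r * β ^ (s + 1)) x) (br u₁ u₂ ((α ^ r * β ^ s) y)) ((α ^ r * β ^ (s + 1)) z) +
        (-1 : 𝕜) ^ ((jx.val + jy.val) * (i₁.val + i₂.val)) •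
          br ((α ^ r * β ^ (s + 1)) x) ((α ^ r * β ^ (s + 1)) y)
            (br u₁ u₂ ((α ^ r * β ^ s) z)) := by
    intro jx jy jz x hx y hy z hz
    have hX : (α ^ r * β ^ s) x ∈ G jx := gradeE jx x hx
    have hY : (α ^ r * β ^ s) y ∈ G jy := gradeE jy y hy
    have hZ : (α ^ r * β ^ s) z ∈ G jz := gradeE jz z hz
    have hX' : bi ((α ^ r * β ^ s) x) ∈ G jx := gradeInv β hβbij βev jx _ hX
    have hY' : bi ((α ^ r * β ^ s) y) ∈ G jy := gradeInv β hβbij βev jy _ hY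
    have hZ' : ai ((α ^ r * β ^ s) z) ∈ G jz := gradeInv α hαbij αev jz _ hZ
    have hβZ' : β (ai ((α ^ r * β ^ s) z)) ∈ G jz := βev jz _ hZ'
    have hDx : br u₁ u₂ ((α ^ r * β ^ s) x) ∈ G (i₁ + i₂ + jx) :=
      brg i₁ i₂ jx u₁ hu₁ u₂ hu₂ _ hX
    have hDy : br u₁ u₂ ((α ^ r * β ^ s) y) ∈ G (i₁ + i₂ + jy) :=
      brg i₁ i₂ jy u₁ hu₁ u₂ hu₂ _ hY
    have hbDx : bi (br u₁ u₂ ((α ^ r * β ^ s) x)) ∈ G (i₁ + i₂ + jx) :=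
      gradeInv β hβbij βev _ _ hDx
    have hbDy : bi (br u₁ u₂ ((α ^ r * β ^ s) y)) ∈ G (i₁ + i₂ + jy) :=
      gradeInv β hβbij βev _ _ hDy
    have hJ := jac i₁ i₂ jx jy jz u₁ hu₁ u₂ hu₂ _ hX' _ hY' _ hZ'
    simp only [hβu₁, hβu₂, hbb, haa] at hJ
    simp only [habi] at hJ
    rw [sk₂ jz (i₁ + i₂ + jx) (β (ai ((α ^ r * β ^ s) z))) hβZ'
      (bi (br u₁ u₂ ((α ^ r * β ^ s) x))) hbDx ((α ^ r * β ^ s) y)] at hJ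
    rw [sk₁ jy (i₁ + i₂ + jx) ((α ^ r * β ^ s) y) hY
      (bi (br u₁ u₂ ((α ^ r * β ^ s) x))) hbDx (β (ai ((α ^ r * β ^ s) z)))] at hJ
    rw [sk₂ jz (i₁ + i₂ + jy) (β (ai ((α ^ r * β ^ s) z))) hβZ'
      (bi (br u₁ u₂ ((α ^ r * β ^ s) y))) hbDy ((α ^ r * β ^ s) x)] at hJ
    simp only [hbb] at hJ
    simp only [hco] at hJ
    simp only [haa] at hJ
    rw [multE, hJ]
    simp only [hT]
    simp only [smul_smul]
    rw [sub_eq_add_neg, ← neg_smul]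
    congr 1
    congr 1
    · refine smul_eq_self_of_one ?_ _
      simp only [neg_mul, mul_neg, neg_neg, ← pow_add]
      apply Even.neg_one_pow
      rcases h01 i₁ with h1 | h1 <;> rcases h01 i₂ with h2 | h2 <;>
        rcases h01 jx with h3 | h3 <;> rcases h01 jy with h4 | h4 <;>
        rcases h01 jz with h5 | h5 <;> subst_vars <;> decide
    · refine smul_congr_coef ?_ _
      simp only [neg_mul, mul_neg, neg_neg, ← pow_add]
      apply neg_one_pow_congr'
      rcases h01 i₁ with h1 | h1 <;> rcases h01 i₂ with h2 | h2 <;>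
        rcases h01 jx with h3 | h3 <;> rcases h01 jy with h4 | h4 <;>
        rcases h01 jz with h5 | h5 <;> subst_vars <;> decide
  -- general z by decomposition
  intro jx jy x hx y hy z
  have hz : z ∈ G 0 ⊔ G 1 := by rw [hsup]; trivial
  rcases Submodule.mem_sup.1 hz with ⟨a, ha, b, hb, hab⟩
  have ka := key jx jy 0 x hx y hy a ha
  have kb := key jx jy 1 x hx y hy b hb
  rw [← hab, add₃ x y a b, map_add, add₃ u₁ u₂ _ _, ka, kb]
  simp only [map_add, add₃, smul_add]
  abel
end

section
/- For a regular 3-BiHom-Lie superalgebra g, the space Der(g) = ⊕_{s,r≥0} Der_{α^s β^r}(g) is closed under the supercommutator: if D ∈ Der_{α^s β^r}(g) and D' ∈ Der_{α^{s'} β^{r'}}(g), then [D, D'] = D∘D' - (-1)^{|D||D'|} D'∘D belongs to Der_{α^{s+s'} β^{r+r'}}(g). -/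
/-- `D` is an `(α^s β^r)`-derivation of parity `d` of the 3-BiHom-Lie superalgebra. -/
def IsDer (𝕜 : Type*) [Field 𝕜] {V : Type*} [AddCommGroup V] [Module 𝕜 V]
    (G : ZMod 2 → Submodule 𝕜 V) (br : V → V → V → V) (α β : Module.End 𝕜 V)
    (s r : ℕ) (d : ZMod 2) (D : Module.End 𝕜 V) : Prop :=
  (∀ x, D (α x) = α (D x)) ∧ (∀ x, D (β x) = β (D x)) ∧
  (∀ i, ∀ x ∈ G i, D x ∈ G (i + d)) ∧
  (∀ (jx jy : ZMod 2), ∀ x ∈ G jx, ∀ y ∈ G jy, ∀ z : V,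
    D (br x y z) =
      br (D x) ((α ^ s * β ^ r) y) ((α ^ s * β ^ r) z) +
      (-1 : 𝕜) ^ (jx.val * d.val) • br ((α ^ s * β ^ r) x) (D y) ((α ^ s * β ^ r) z) +
      (-1 : 𝕜) ^ ((jx.val + jy.val) * d.val) •
        br ((α ^ s * β ^ r) x) ((α ^ s * β ^ r) y) (D z))

set_option maxHeartbeats 1000000 in
/-- For a regular 3-BiHom-Lie superalgebra, the supercommutator of an `(α^s β^r)`-derivation
of parity `d` and an `(α^{s'} β^{r'})`-derivation of parity `d'` is an
`(α^{s+s'} β^{r+r'})`-derivation of parity `d + d'`. -/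
theorem statement8 {𝕜 V : Type*} [Field 𝕜] [AddCommGroup V] [Module 𝕜 V]
    (G : ZMod 2 → Submodule 𝕜 V) (br : V → V → V → V) (α β : Module.End 𝕜 V)
    (halg : Is3BiHomLieSuper 𝕜 G br α β)
    (hαbij : Function.Bijective α) (hβbij : Function.Bijective β)
    (s r s' r' : ℕ) (d d' : ZMod 2) (D D' : Module.End 𝕜 V)
    (hD : IsDer 𝕜 G br α β s r d D) (hD' : IsDer 𝕜 G br α β s' r' d' D') :
    IsDer 𝕜 G br α β (s + s') (r + r') (d + d')
      (D * D' - ((-1 : 𝕜) ^ (d.val * d'.val)) • (D' * D)) := by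

  obtain ⟨hDα, hDβ, hDg, hDbr⟩ := hD
  obtain ⟨hD'α, hD'β, hD'g, hD'br⟩ := hD'
  have powc : ∀ (f g : Module.End 𝕜 V), (∀ v, f (g v) = g (f v)) →
      ∀ (n : ℕ) (v : V), f ((g ^ n) v) = (g ^ n) (f v) := by
    intro f g h n
    induction n with
    | zero => intro v; simp
    | succ k ih =>
      intro v
      rw [pow_succ, Module.End.mul_apply, Module.End.mul_apply, ih, h]
  have hDαn := powc D α hDα
  have hDβn := powc D β hDβ
  have hD'αn := powc D' α hD'α
  have hD'βn := powc D' β hD'β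
  have hβαn : ∀ (m n : ℕ) (v : V), (β ^ m) ((α ^ n) v) = (α ^ n) ((β ^ m) v) := by
    intro m n v
    exact powc (β ^ m) α (fun w => (powc α β halg.comm m w).symm) n v
  have hswapα : ∀ v : V, (α ^ s') ((α ^ s) v) = (α ^ s) ((α ^ s') v) := fun v =>
    powc (α ^ s') α (fun w => (powc α α (fun _ => rfl) s' w).symm) s v
  have hswapβ : ∀ v : V, (β ^ r') ((β ^ r) v) = (β ^ r) ((β ^ r') v) := fun v =>
    powc (β ^ r') β (fun w => (powc β β (fun _ => rfl) r' w).symm) r v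
  have memαn : ∀ (n : ℕ) (i : ZMod 2), ∀ x ∈ G i, (α ^ n) x ∈ G i := by
    intro n
    induction n with
    | zero => intro i x hx; simpa using hx
    | succ k ih =>
      intro i x hx
      rw [pow_succ, Module.End.mul_apply]
      exact ih i _ (halg.α_even i x hx)
  have memβn : ∀ (n : ℕ) (i : ZMod 2), ∀ x ∈ G i, (β ^ n) x ∈ G i := by
    intro n
    induction n with
    | zero => intro i x hx; simpa using hx
    | succ k ih =>
      intro i x hx
      rw [pow_succ, Module.End.mul_apply]
      exact ih i _ (halg.β_even i x hx)
  have br_sub₁ : ∀ a b u v, br (a - b) u v = br a u v - br b u v := by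
    intro a b u v
    rw [sub_eq_add_neg, halg.add₁, ← neg_one_smul 𝕜 b, halg.smul₁, neg_one_smul,
      ← sub_eq_add_neg]
  have br_sub₂ : ∀ a u u' v, br a (u - u') v = br a u v - br a u' v := by
    intro a u u' v
    rw [sub_eq_add_neg, halg.add₂, ← neg_one_smul 𝕜 u', halg.smul₂, neg_one_smul,
      ← sub_eq_add_neg]
  have br_sub₃ : ∀ a u v v', br a u (v - v') = br a u v - br a u v' := by
    intro a u v v'
    rw [sub_eq_add_neg, halg.add₃, ← neg_one_smul 𝕜 v', halg.smul₃, neg_one_smul,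
      ← sub_eq_add_neg]
  refine ⟨?_, ?_, ?_, ?_⟩
  · intro x
    simp only [LinearMap.sub_apply, LinearMap.smul_apply, Module.End.mul_apply, map_sub,
      map_smul, hDα, hD'α]
  · intro x
    simp only [LinearMap.sub_apply, LinearMap.smul_apply, Module.End.mul_apply, map_sub,
      map_smul, hDβ, hD'β]
  · intro i x hx
    simp only [LinearMap.sub_apply, LinearMap.smul_apply, Module.End.mul_apply]
    have h1 : D (D' x) ∈ G (i + (d + d')) := by
      have e : i + d' + d = i + (d + d') := by ring
      rw [← e]; exact hDg _ _ (hD'g i x hx)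
    have h2 : D' (D x) ∈ G (i + (d + d')) := by
      have e : i + d + d' = i + (d + d') := by ring
      rw [← e]; exact hD'g _ _ (hDg i x hx)
    exact Submodule.sub_mem _ h1 (Submodule.smul_mem _ _ h2)
  · intro jx jy x hx y hy z
    have hA'x : (α ^ s' * β ^ r') x ∈ G jx := by
      rw [Module.End.mul_apply]; exact memαn s' jx _ (memβn r' jx x hx)
    have hA'y : (α ^ s' * β ^ r') y ∈ G jy := by
      rw [Module.End.mul_apply]; exact memαn s' jy _ (memβn r' jy y hy)
    have hAx : (α ^ s * β ^ r) x ∈ G jx := by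
      rw [Module.End.mul_apply]; exact memαn s jx _ (memβn r jx x hx)
    have hAy : (α ^ s * β ^ r) y ∈ G jy := by
      rw [Module.End.mul_apply]; exact memαn s jy _ (memβn r jy y hy)
    have hD'x : D' x ∈ G (jx + d') := hD'g jx x hx
    have hD'y : D' y ∈ G (jy + d') := hD'g jy y hy
    have hDx : D x ∈ G (jx + d) := hDg jx x hx
    have hDy : D y ∈ G (jy + d) := hDg jy y hy
    have e1 := hDbr (jx + d') jy (D' x) hD'x ((α ^ s' * β ^ r') y) hA'y ((α ^ s' * β ^ r') z)
    have e2 := hDbr jx (jy + d') ((α ^ s' * β ^ r') x) hA'x (D' y) hD'y ((α ^ s' * β ^ r') z)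
    have e3 := hDbr jx jy ((α ^ s' * β ^ r') x) hA'x ((α ^ s' * β ^ r') y) hA'y (D' z)
    have f1 := hD'br (jx + d) jy (D x) hDx ((α ^ s * β ^ r) y) hAy ((α ^ s * β ^ r) z)
    have f2 := hD'br jx (jy + d) ((α ^ s * β ^ r) x) hAx (D y) hDy ((α ^ s * β ^ r) z)
    have f3 := hD'br jx jy ((α ^ s * β ^ r) x) hAx ((α ^ s * β ^ r) y) hAy (D z)
    simp only [LinearMap.sub_apply, LinearMap.smul_apply, Module.End.mul_apply]
    rw [hD'br jx jy x hx y hy z, hDbr jx jy x hx y hy z]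
    simp only [map_add, map_smul]
    rw [e1, e2, e3, f1, f2, f3]
    simp only [br_sub₁, br_sub₂, br_sub₃, halg.smul₁, halg.smul₂, halg.smul₃]
    simp only [pow_add, Module.End.mul_apply, hDαn, hDβn, hD'αn, hD'βn, hβαn, hswapα, hswapβ, ZMod.val_add]
    have h1 : jx.val = 0 ∨ jx.val = 1 := by have := ZMod.val_lt jx; omega
    have h2 : jy.val = 0 ∨ jy.val = 1 := by have := ZMod.val_lt jy; omega
    have h3 : d.val = 0 ∨ d.val = 1 := by have := ZMod.val_lt d; omega
    have h4 : d'.val = 0 ∨ d'.val = 1 := by have := ZMod.val_lt d'; omega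
    rcases h1 with h1 | h1 <;> rcases h2 with h2 | h2 <;> rcases h3 with h3 | h3 <;>
        rcases h4 with h4 | h4 <;>
      simp only [h1, h2, h3, h4] <;> norm_num <;> module
end

section
/- Let (g, [·,·,·], α, β) be a 3-BiHom-Lie superalgebra, (M, ρ, α_M, β_M) a representation with α, β_M surjective, and θ a 3-cocycle associated with ρ. Then g ⊕ M with bracket [u+x, v+y, w+z]_θ = [u,v,w] + θ(u,v,w) + ρ(u,v)(z) - (-1)^{|v||w|} ρ(u, α^{-1}β(w))(α_M β_M^{-1}(y)) + (-1)^{|u|(|v|+|w|)} ρ(v, α^{-1}β(w))(α_M β_M^{-1}(x)) and structure maps α+α_M, β+β_M is a 3-BiHom-Lie superalgebra (the T_θ-extension of g by M). -/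
structure IsRep3 (𝕜 : Type*) [Field 𝕜] {V M : Type*} [AddCommGroup V] [Module 𝕜 V]
    [AddCommGroup M] [Module 𝕜 M]
    (G : ZMod 2 → Submodule 𝕜 V) (br : V → V → V → V) (α β : V →ₗ[𝕜] V)
    (GM : ZMod 2 → Submodule 𝕜 M) (ρ : V → V → M →ₗ[𝕜] M) (αM βM : M →ₗ[𝕜] M) : Prop where
  supM : GM 0 ⊔ GM 1 = ⊤
  infM : GM 0 ⊓ GM 1 = ⊥
  commM : ∀ m, αM (βM m) = βM (αM m)
  ρadd₁ : ∀ x x' y : V, ρ (x + x') y = ρ x y + ρ x' y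
  ρsmul₁ : ∀ (c : 𝕜) (x y : V), ρ (c • x) y = c • ρ x y
  ρadd₂ : ∀ x y y' : V, ρ x (y + y') = ρ x y + ρ x y'
  ρsmul₂ : ∀ (c : 𝕜) (x y : V), ρ x (c • y) = c • ρ x y
  ρskew : ∀ (i j : ZMod 2), ∀ x ∈ G i, ∀ y ∈ G j, ρ x y = -((-1 : 𝕜) ^ (i.val * j.val)) • ρ y x
  ρeven : ∀ (i j k : ZMod 2), ∀ x ∈ G i, ∀ y ∈ G j, ∀ m ∈ GM k, ρ x y m ∈ GM (i + j + k)
  αM_even : ∀ k, ∀ m ∈ GM k, αM m ∈ GM k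
  βM_even : ∀ k, ∀ m ∈ GM k, βM m ∈ GM k
  rep₁ : ∀ u v, ρ (α u) (α v) ∘ₗ αM = αM ∘ₗ ρ u v
  rep₂ : ∀ u v, ρ (β u) (β v) ∘ₗ βM = βM ∘ₗ ρ u v
  rep₃ : ∀ (iu iv ix iy : ZMod 2), ∀ u ∈ G iu, ∀ v ∈ G iv, ∀ x ∈ G ix, ∀ y ∈ G iy,
    ρ (α (β u)) (α (β v)) ∘ₗ ρ x y =
      (-1 : 𝕜) ^ ((iu.val + iv.val) * (ix.val + iy.val)) • (ρ (β x) (β y) ∘ₗ ρ (α u) (α v)) +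
      ρ (br (β u) (β v) x) (β y) ∘ₗ βM +
      (-1 : 𝕜) ^ (ix.val * (iu.val + iv.val)) • (ρ (β x) (br (β u) (β v) y) ∘ₗ βM)
  rep₄ : ∀ (iu iv ix iy : ZMod 2), ∀ u ∈ G iu, ∀ v ∈ G iv, ∀ x ∈ G ix, ∀ y ∈ G iy,
    ρ (br (β u) (β v) x) (β y) ∘ₗ βM =
      (-1 : 𝕜) ^ (iu.val * (ix.val + iv.val)) • (ρ (α (β v)) (β x) ∘ₗ ρ (α u) y) +
      (-1 : 𝕜) ^ (ix.val * (iu.val + iv.val)) • (ρ (β x) (α (β u)) ∘ₗ ρ (α v) y) +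
      ρ (α (β u)) (α (β v)) ∘ₗ ρ x y

structure Is3Cocycle (𝕜 : Type*) [Field 𝕜] {V M : Type*} [AddCommGroup V] [Module 𝕜 V]
    [AddCommGroup M] [Module 𝕜 M]
    (G : ZMod 2 → Submodule 𝕜 V) (br : V → V → V → V) (α β : V →ₗ[𝕜] V)
    (GM : ZMod 2 → Submodule 𝕜 M) (ρ : V → V → M →ₗ[𝕜] M) (αM βM : M →ₗ[𝕜] M)
    (θ : V → V → V → M) : Prop where
  θadd₁ : ∀ x x' y z : V, θ (x + x') y z = θ x y z + θ x' y z
  θsmul₁ : ∀ (c : 𝕜) (x y z : V), θ (c • x) y z = c • θ x y z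
  θadd₂ : ∀ x y y' z : V, θ x (y + y') z = θ x y z + θ x y' z
  θsmul₂ : ∀ (c : 𝕜) (x y z : V), θ x (c • y) z = c • θ x y z
  θadd₃ : ∀ x y z z' : V, θ x y (z + z') = θ x y z + θ x y z'
  θsmul₃ : ∀ (c : 𝕜) (x y z : V), θ x y (c • z) = c • θ x y z
  θeven : ∀ (i j k : ZMod 2), ∀ x ∈ G i, ∀ y ∈ G j, ∀ z ∈ G k, θ x y z ∈ GM (i + j + k)
  equiv_α : ∀ x y z, αM (θ x y z) = θ (α x) (α y) (α z)
  equiv_β : ∀ x y z, βM (θ x y z) = θ (β x) (β y) (β z)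
  cskew₁ : ∀ (i j : ZMod 2), ∀ x ∈ G i, ∀ y ∈ G j, ∀ z : V,
    θ (β x) (β y) (α z) = -((-1 : 𝕜) ^ (i.val * j.val)) • θ (β y) (β x) (α z)
  cskew₂ : ∀ (j k : ZMod 2), ∀ y ∈ G j, ∀ z ∈ G k, ∀ x : V,
    θ (β x) (β y) (α z) = -((-1 : 𝕜) ^ (j.val * k.val)) • θ (β x) (β z) (α y)
  cocycle : ∀ (i1 i2 i3 i4 i5 : ZMod 2), ∀ x1 ∈ G i1, ∀ x2 ∈ G i2, ∀ x3 ∈ G i3,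
      ∀ x4 ∈ G i4, ∀ x5 ∈ G i5,
    θ (β (β x1)) (β (β x2)) (br (β x3) (β x4) (α x5)) +
      ρ (β (β x1)) (β (β x2)) (θ (β x3) (β x4) (α x5)) =
    (-1 : 𝕜) ^ ((i4.val + i5.val) * (i1.val + i2.val + i3.val)) •
      (θ (β (β x4)) (β (β x5)) (br (β x1) (β x2) (α x3)) +
        ρ (β (β x4)) (β (β x5)) (θ (β x1) (β x2) (α x3))) -
    (-1 : 𝕜) ^ ((i3.val + i5.val) * (i1.val + i2.val) + i4.val * i5.val) •
      (θ (β (β x3)) (β (β x5)) (br (β x1) (β x2) (α x4)) +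
        ρ (β (β x3)) (β (β x5)) (θ (β x1) (β x2) (α x4))) +
    (-1 : 𝕜) ^ ((i3.val + i4.val) * (i1.val + i2.val)) •
      (θ (β (β x3)) (β (β x4)) (br (β x1) (β x2) (α x5)) +
        ρ (β (β x3)) (β (β x4)) (θ (β x1) (β x2) (α x5)))

set_option maxHeartbeats 3000000 in
/-- `T_θ`-extension: given a 3-BiHom-Lie superalgebra `g`, a representation
`(M, ρ, α_M, β_M)` with `α`, `β_M` surjective (invertible) and a 3-cocycle `θ`,
any trilinear bracket on `g ⊕ M` which on homogeneous elements is given by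
`[u+x,v+y,w+z]_θ = [u,v,w] + θ(u,v,w) + ρ(u,v)z − (−1)^{|v||w|}ρ(u,α⁻¹β w)(α_M β_M⁻¹ y)
  + (−1)^{|u|(|v|+|w|)}ρ(v,α⁻¹β w)(α_M β_M⁻¹ x)`
makes `(g ⊕ M, [·,·,·]_θ, α+α_M, β+β_M)` a 3-BiHom-Lie superalgebra. -/
theorem statement10 {𝕜 V M : Type*} [Field 𝕜] [AddCommGroup V] [Module 𝕜 V]
    [AddCommGroup M] [Module 𝕜 M]
    (G : ZMod 2 → Submodule 𝕜 V) (br : V → V → V → V) (α β : V →ₗ[𝕜] V)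
    (GM : ZMod 2 → Submodule 𝕜 M) (ρ : V → V → M →ₗ[𝕜] M) (αM βM : M →ₗ[𝕜] M)
    (θ : V → V → V → M)
    (halg : Is3BiHomLieSuper 𝕜 G br α β)
    (hrep : IsRep3 𝕜 G br α β GM ρ αM βM)
    (hcoc : Is3Cocycle 𝕜 G br α β GM ρ αM βM θ)
    (hαsurj : Function.Surjective α) (hβMsurj : Function.Surjective βM)
    (αi : V →ₗ[𝕜] V) (hαi₁ : ∀ x, α (αi x) = x) (hαi₂ : ∀ x, αi (α x) = x)
    (βMi : M →ₗ[𝕜] M) (hβMi₁ : ∀ m, βM (βMi m) = m) (hβMi₂ : ∀ m, βMi (βM m) = m)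
    (Br : V × M → V × M → V × M → V × M)
    (hadd₁ : ∀ p p' q r, Br (p + p') q r = Br p q r + Br p' q r)
    (hsmul₁ : ∀ (c : 𝕜) p q r, Br (c • p) q r = c • Br p q r)
    (hadd₂ : ∀ p q q' r, Br p (q + q') r = Br p q r + Br p q' r)
    (hsmul₂ : ∀ (c : 𝕜) p q r, Br p (c • q) r = c • Br p q r)
    (hadd₃ : ∀ p q r r', Br p q (r + r') = Br p q r + Br p q r')
    (hsmul₃ : ∀ (c : 𝕜) p q r, Br p q (c • r) = c • Br p q r)
    (hBr : ∀ (i j k : ZMod 2) (u v w : V) (x y z : M),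
      u ∈ G i → x ∈ GM i → v ∈ G j → y ∈ GM j → w ∈ G k → z ∈ GM k →
      Br (u, x) (v, y) (w, z) =
        (br u v w,
          θ u v w + ρ u v z - (-1 : 𝕜) ^ (j.val * k.val) • ρ u (αi (β w)) (αM (βMi y)) +
            (-1 : 𝕜) ^ (i.val * (j.val + k.val)) • ρ v (αi (β w)) (αM (βMi x)))) :
    Is3BiHomLieSuper 𝕜 (fun i => (G i).prod (GM i)) Br (α.prodMap αM) (β.prodMap βM) := by
  -- ## Preliminaries
  have htwo : ∀ i : ZMod 2, i = 0 ∨ i = 1 := by decide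
  have injα : Function.Injective α := fun a b h => by rw [← hαi₂ a, h, hαi₂]
  have injβM : Function.Injective βM := fun a b h => by rw [← hβMi₂ a, h, hβMi₂]
  have hdecV : ∀ v : V, ∃ a b, a ∈ G 0 ∧ b ∈ G 1 ∧ v = a + b := by
    intro v
    have hv : v ∈ G 0 ⊔ G 1 := by rw [halg.sup_top]; trivial
    rcases Submodule.mem_sup.mp hv with ⟨a, ha, b, hb, h⟩
    exact ⟨a, b, ha, hb, h.symm⟩
  have hdecM : ∀ m : M, ∃ a b, a ∈ GM 0 ∧ b ∈ GM 1 ∧ m = a + b := by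
    intro m
    have hm : m ∈ GM 0 ⊔ GM 1 := by rw [hrep.supM]; trivial
    rcases Submodule.mem_sup.mp hm with ⟨a, ha, b, hb, h⟩
    exact ⟨a, b, ha, hb, h.symm⟩
  have hdecP : ∀ p : V × M, ∃ q r : V × M,
      q ∈ (G 0).prod (GM 0) ∧ r ∈ (G 1).prod (GM 1) ∧ p = q + r := by
    rintro ⟨pv, pm⟩
    obtain ⟨a, b, ha, hb, h1⟩ := hdecV pv
    obtain ⟨c, d, hc, hd, h2⟩ := hdecM pm
    exact ⟨(a, c), (b, d), Submodule.mem_prod.mpr ⟨ha, hc⟩, Submodule.mem_prod.mpr ⟨hb, hd⟩,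
      by rw [Prod.mk_add_mk, h1, h2]⟩
  have hαiG : ∀ (i : ZMod 2) (v : V), v ∈ G i → αi v ∈ G i := by
    intro i v hv
    obtain ⟨a, b, ha, hb, hab⟩ := hdecV (αi v)
    have hv' : v = α a + α b := by rw [← map_add, ← hab, hαi₁]
    rcases htwo i with rfl | rfl
    · have hb0 : b = 0 := by
        apply injα
        have h0 : α b ∈ G 0 := by
          have : α b = v - α a := by rw [hv']; abel
          rw [this]; exact sub_mem hv (halg.α_even 0 a ha)
        have : α b ∈ G 0 ⊓ G 1 := ⟨h0, halg.α_even 1 b hb⟩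
        rw [halg.inf_bot] at this
        simpa using this
      rw [hab, hb0, add_zero]; exact ha
    · have ha0 : a = 0 := by
        apply injα
        have h1 : α a ∈ G 1 := by
          have : α a = v - α b := by rw [hv']; abel
          rw [this]; exact sub_mem hv (halg.α_even 1 b hb)
        have : α a ∈ G 0 ⊓ G 1 := ⟨halg.α_even 0 a ha, h1⟩
        rw [halg.inf_bot] at this
        simpa using this
      rw [hab, ha0, zero_add]; exact hb
  have hβMiG : ∀ (i : ZMod 2) (m : M), m ∈ GM i → βMi m ∈ GM i := by
    intro i m hm
    obtain ⟨a, b, ha, hb, hab⟩ := hdecM (βMi m)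
    have hm' : m = βM a + βM b := by rw [← map_add, ← hab, hβMi₁]
    rcases htwo i with rfl | rfl
    · have hb0 : b = 0 := by
        apply injβM
        have h0 : βM b ∈ GM 0 := by
          have : βM b = m - βM a := by rw [hm']; abel
          rw [this]; exact sub_mem hm (hrep.βM_even 0 a ha)
        have : βM b ∈ GM 0 ⊓ GM 1 := ⟨h0, hrep.βM_even 1 b hb⟩
        rw [hrep.infM] at this
        simpa using this
      rw [hab, hb0, add_zero]; exact ha
    · have ha0 : a = 0 := by
        apply injβM
        have h1 : βM a ∈ GM 1 := by
          have : βM a = m - βM b := by rw [hm']; abel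
          rw [this]; exact sub_mem hm (hrep.βM_even 1 b hb)
        have : βM a ∈ GM 0 ⊓ GM 1 := ⟨hrep.βM_even 0 a ha, h1⟩
        rw [hrep.infM] at this
        simpa using this
      rw [hab, ha0, zero_add]; exact hb
  have hαiβ : ∀ v, αi (β v) = β (αi v) := fun v => injα (by rw [hαi₁, halg.comm, hαi₁])
  have hβMiαM : ∀ m, βMi (αM m) = αM (βMi m) :=
    fun m => injβM (by rw [hβMi₁, ← hrep.commM, hβMi₁])
  have hcommM : ∀ m, βM (αM m) = αM (βM m) := fun m => (hrep.commM m).symm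
  have hαβα : ∀ w, αi (β (α w)) = β w := fun w => by rw [← halg.comm, hαi₂]
  have hαβαi : ∀ t, α (β (αi t)) = β t := fun t => by rw [halg.comm, hαi₁]
  have hρ₁ : ∀ u v (m : M), ρ (α u) (α v) (αM m) = αM (ρ u v m) :=
    fun u v m => LinearMap.congr_fun (hrep.rep₁ u v) m
  have hρ₂ : ∀ u v (m : M), ρ (β u) (β v) (βM m) = βM (ρ u v m) :=
    fun u v m => LinearMap.congr_fun (hrep.rep₂ u v) m
  have hflip : ∀ (i j : ZMod 2) (a : V), a ∈ G i → ∀ b : V, b ∈ G j → ∀ m : M,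
      ρ a b m = -((-1 : 𝕜) ^ (i.val * j.val)) • ρ b a m := by
    intro i j a ha b hb m
    rw [hrep.ρskew i j a ha b hb]
    simp
  have hflipIn : ∀ (a b : V) (i j : ZMod 2) (c d : V), c ∈ G i → d ∈ G j → ∀ m : M,
      ρ a b (ρ c d m) = -((-1 : 𝕜) ^ (i.val * j.val)) • ρ a b (ρ d c m) := by
    intro a b i j c d hc hd m
    rw [hflip i j c hc d hd m, map_smul]
  have hGcast : ∀ (i j : ZMod 2) (m : M), i = j → m ∈ GM i → m ∈ GM j :=
    fun i j m h hm => h ▸ hm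
  have hBigMem : ∀ (k : ZMod 2) (c₁ c₂ : 𝕜) (t₁ t₂ t₃ t₄ : M), t₁ ∈ GM k → t₂ ∈ GM k →
      t₃ ∈ GM k → t₄ ∈ GM k → t₁ + t₂ - c₁ • t₃ + c₂ • t₄ ∈ GM k := by
    intro k c₁ c₂ t₁ t₂ t₃ t₄ h1 h2 h3 h4
    exact add_mem (sub_mem (add_mem h1 h2) (Submodule.smul_mem _ _ h3)) (Submodule.smul_mem _ _ h4)
  have hBIG : ∀ (p q r : ZMod 2) (xp xq xr : V) (mp mq mr : M), xp ∈ G p → xq ∈ G q →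
      xr ∈ G r → mp ∈ GM p → mq ∈ GM q → mr ∈ GM r →
      (θ (β xp) (β xq) (α xr) + ρ (β xp) (β xq) (αM mr)
        - (-1 : 𝕜) ^ (q.val * r.val) • ρ (β xp) (β xr) (αM mq)
        + (-1 : 𝕜) ^ (p.val * (q.val + r.val)) • ρ (β xq) (β xr) (αM mp)) ∈ GM (p + q + r) := by
    intro p q r xp xq xr mp mq mr hxp hxq hxr hmp hmq hmr
    refine hBigMem _ _ _ _ _ _ _
      (hcoc.θeven p q r _ (halg.β_even _ _ hxp) _ (halg.β_even _ _ hxq) _ (halg.α_even _ _ hxr))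
      (hrep.ρeven p q r _ (halg.β_even _ _ hxp) _ (halg.β_even _ _ hxq) _ (hrep.αM_even _ _ hmr))
      (hGcast _ _ _ (by ring)
        (hrep.ρeven p r q _ (halg.β_even _ _ hxp) _ (halg.β_even _ _ hxr) _ (hrep.αM_even _ _ hmq)))
      (hGcast _ _ _ (by ring)
        (hrep.ρeven q r p _ (halg.β_even _ _ hxq) _ (halg.β_even _ _ hxr) _ (hrep.αM_even _ _ hmp)))
  have hPgen : ∀ a b c : V, αi (β (br (β a) (β b) (α c)))
      = br (β (αi (β a))) (β (αi (β b))) (β c) := by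
    intro a b c
    have hst : β (br (β a) (β b) (α c)) = α (br (β (αi (β a))) (β (αi (β b))) (β c)) := by
      rw [halg.mult_β, halg.mult_α]
      simp only [halg.comm, hαi₁]
    rw [hst, hαi₂]
  have h3' : ∀ (iu iv ix iy : ZMod 2) (u v x y : V), u ∈ G iu → v ∈ G iv → x ∈ G ix →
      y ∈ G iy → ∀ m : M,
      ρ (α (β u)) (α (β v)) (ρ x y m) =
        (-1 : 𝕜) ^ ((iu.val + iv.val) * (ix.val + iy.val)) • ρ (β x) (β y) (ρ (α u) (α v) m) +
        ρ (br (β u) (β v) x) (β y) (βM m) +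
        (-1 : 𝕜) ^ (ix.val * (iu.val + iv.val)) • ρ (β x) (br (β u) (β v) y) (βM m) := by
    intro iu iv ix iy u v x y hu hv hx hy m
    have h := LinearMap.congr_fun (hrep.rep₃ iu iv ix iy u hu v hv x hx y hy) m
    simpa only [LinearMap.add_apply, LinearMap.smul_apply, LinearMap.comp_apply] using h
  have h4' : ∀ (iu iv ix iy : ZMod 2) (u v x y : V), u ∈ G iu → v ∈ G iv → x ∈ G ix →
      y ∈ G iy → ∀ m : M,
      ρ (br (β u) (β v) x) (β y) (βM m) =
        (-1 : 𝕜) ^ (iu.val * (ix.val + iv.val)) • ρ (α (β v)) (β x) (ρ (α u) y m) +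
        (-1 : 𝕜) ^ (ix.val * (iu.val + iv.val)) • ρ (β x) (α (β u)) (ρ (α v) y m) +
        ρ (α (β u)) (α (β v)) (ρ x y m) := by
    intro iu iv ix iy u v x y hu hv hx hy m
    have h := LinearMap.congr_fun (hrep.rep₄ iu iv ix iy u hu v hv x hx y hy) m
    simpa only [LinearMap.add_apply, LinearMap.smul_apply, LinearMap.comp_apply] using h
  -- key homogeneous multiplicativity
  have hkeyα : ∀ (i j k : ZMod 2) (p q r : V × M), p ∈ (G i).prod (GM i) →
      q ∈ (G j).prod (GM j) → r ∈ (G k).prod (GM k) →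
      (α.prodMap αM) (Br p q r)
        = Br ((α.prodMap αM) p) ((α.prodMap αM) q) ((α.prodMap αM) r) := by
    rintro i j k ⟨u, x⟩ ⟨v, y⟩ ⟨w, z⟩ hp hq hr
    rw [Submodule.mem_prod] at hp hq hr
    obtain ⟨hu, hx⟩ := hp; obtain ⟨hv, hy⟩ := hq; obtain ⟨hw, hz⟩ := hr
    rw [hBr i j k u v w x y z hu hx hv hy hw hz]
    simp only [LinearMap.prodMap_apply]
    rw [hBr i j k (α u) (α v) (α w) (αM x) (αM y) (αM z) (halg.α_even i u hu)
      (hrep.αM_even i x hx) (halg.α_even j v hv) (hrep.αM_even j y hy)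
      (halg.α_even k w hw) (hrep.αM_even k z hz)]
    simp only [Prod.mk.injEq]
    refine ⟨halg.mult_α u v w, ?_⟩
    simp only [map_add, map_sub, map_smul, hcoc.equiv_α, ← hρ₁, hαi₁, hαβα, hβMiαM]
  have hkeyβ : ∀ (i j k : ZMod 2) (p q r : V × M), p ∈ (G i).prod (GM i) →
      q ∈ (G j).prod (GM j) → r ∈ (G k).prod (GM k) →
      (β.prodMap βM) (Br p q r)
        = Br ((β.prodMap βM) p) ((β.prodMap βM) q) ((β.prodMap βM) r) := by
    rintro i j k ⟨u, x⟩ ⟨v, y⟩ ⟨w, z⟩ hp hq hr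
    rw [Submodule.mem_prod] at hp hq hr
    obtain ⟨hu, hx⟩ := hp; obtain ⟨hv, hy⟩ := hq; obtain ⟨hw, hz⟩ := hr
    rw [hBr i j k u v w x y z hu hx hv hy hw hz]
    simp only [LinearMap.prodMap_apply]
    rw [hBr i j k (β u) (β v) (β w) (βM x) (βM y) (βM z) (halg.β_even i u hu)
      (hrep.βM_even i x hx) (halg.β_even j v hv) (hrep.βM_even j y hy)
      (halg.β_even k w hw) (hrep.βM_even k z hz)]
    simp only [Prod.mk.injEq]
    refine ⟨halg.mult_β u v w, ?_⟩
    simp only [map_add, map_sub, map_smul, hcoc.equiv_β, ← hρ₂, hαiβ, hcommM, hβMi₁, hβMi₂]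
  -- key homogeneous skew-symmetries
  have hskew₁key : ∀ (i j k : ZMod 2) (p q r : V × M), p ∈ (G i).prod (GM i) →
      q ∈ (G j).prod (GM j) → r ∈ (G k).prod (GM k) →
      Br ((β.prodMap βM) p) ((β.prodMap βM) q) ((α.prodMap αM) r) =
        -((-1 : 𝕜) ^ (i.val * j.val)) •
          Br ((β.prodMap βM) q) ((β.prodMap βM) p) ((α.prodMap αM) r) := by
    rintro i j k ⟨u, x⟩ ⟨v, y⟩ ⟨w, z⟩ hp hq hr
    rw [Submodule.mem_prod] at hp hq hr
    obtain ⟨hu, hx⟩ := hp; obtain ⟨hv, hy⟩ := hq; obtain ⟨hw, hz⟩ := hr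
    simp only [LinearMap.prodMap_apply]
    rw [hBr i j k (β u) (β v) (α w) (βM x) (βM y) (αM z) (halg.β_even i u hu)
        (hrep.βM_even i x hx) (halg.β_even j v hv) (hrep.βM_even j y hy)
        (halg.α_even k w hw) (hrep.αM_even k z hz),
      hBr j i k (β v) (β u) (α w) (βM y) (βM x) (αM z) (halg.β_even j v hv)
        (hrep.βM_even j y hy) (halg.β_even i u hu) (hrep.βM_even i x hx)
        (halg.α_even k w hw) (hrep.αM_even k z hz)]
    simp only [hαβα, hβMi₂, Prod.smul_mk, Prod.mk.injEq]
    refine ⟨halg.skew₁ i j u hu v hv w, ?_⟩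
    have hθ := hcoc.cskew₁ i j u hu v hv w
    have hρf := hflip i j (β u) (halg.β_even i u hu) (β v) (halg.β_even j v hv) (αM z)
    rcases htwo i with rfl | rfl <;> rcases htwo j with rfl | rfl <;>
      rcases htwo k with rfl | rfl <;>
      linear_combination (norm :=
        (simp only [show ((0 : ZMod 2)).val = 0 from rfl, show ((1 : ZMod 2)).val = 1 from rfl];
          module)) hθ + hρf
  have hskew₂key : ∀ (i j k : ZMod 2) (p q r : V × M), p ∈ (G i).prod (GM i) →
      q ∈ (G j).prod (GM j) → r ∈ (G k).prod (GM k) →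
      Br ((β.prodMap βM) p) ((β.prodMap βM) q) ((α.prodMap αM) r) =
        -((-1 : 𝕜) ^ (j.val * k.val)) •
          Br ((β.prodMap βM) p) ((β.prodMap βM) r) ((α.prodMap αM) q) := by
    rintro i j k ⟨u, x⟩ ⟨v, y⟩ ⟨w, z⟩ hp hq hr
    rw [Submodule.mem_prod] at hp hq hr
    obtain ⟨hu, hx⟩ := hp; obtain ⟨hv, hy⟩ := hq; obtain ⟨hw, hz⟩ := hr
    simp only [LinearMap.prodMap_apply]
    rw [hBr i j k (β u) (β v) (α w) (βM x) (βM y) (αM z) (halg.β_even i u hu)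
        (hrep.βM_even i x hx) (halg.β_even j v hv) (hrep.βM_even j y hy)
        (halg.α_even k w hw) (hrep.αM_even k z hz),
      hBr i k j (β u) (β w) (α v) (βM x) (βM z) (αM y) (halg.β_even i u hu)
        (hrep.βM_even i x hx) (halg.β_even k w hw) (hrep.βM_even k z hz)
        (halg.α_even j v hv) (hrep.αM_even j y hy)]
    simp only [hαβα, hβMi₂, Prod.smul_mk, Prod.mk.injEq]
    refine ⟨halg.skew₂ j k v hv w hw u, ?_⟩
    have hθ := hcoc.cskew₂ j k v hv w hw u
    have hρf := hflip j k (β v) (halg.β_even j v hv) (β w) (halg.β_even k w hw) (αM x)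
    have hρf2 := congrArg (HSMul.hSMul ((-1 : 𝕜) ^ (i.val * (j.val + k.val)))) hρf
    rcases htwo i with rfl | rfl <;> rcases htwo j with rfl | rfl <;>
      rcases htwo k with rfl | rfl <;>
      linear_combination (norm :=
        (simp only [show ((0 : ZMod 2)).val = 0 from rfl, show ((1 : ZMod 2)).val = 1 from rfl];
          module)) hθ + hρf2
  refine
  { sup_top := ?_
    inf_bot := ?_
    add₁ := hadd₁
    smul₁ := hsmul₁
    add₂ := hadd₂
    smul₂ := hsmul₂
    add₃ := hadd₃
    smul₃ := hsmul₃
    α_even := ?_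
    β_even := ?_
    br_grade := ?_
    comm := ?_
    mult_α := ?_
    mult_β := ?_
    skew₁ := ?_
    skew₂ := ?_
    jacobi := ?_ }
  -- sup_top
  · rw [Submodule.eq_top_iff']
    intro p
    obtain ⟨q, r, hq, hr, rfl⟩ := hdecP p
    exact Submodule.add_mem _ (Submodule.mem_sup_left hq) (Submodule.mem_sup_right hr)
  -- inf_bot
  · rw [Submodule.eq_bot_iff]
    rintro ⟨v, m⟩ hm
    obtain ⟨h0, h1⟩ := Submodule.mem_inf.mp hm
    rw [Submodule.mem_prod] at h0 h1
    have hv : v ∈ G 0 ⊓ G 1 := ⟨h0.1, h1.1⟩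
    have hmm : m ∈ GM 0 ⊓ GM 1 := ⟨h0.2, h1.2⟩
    rw [halg.inf_bot] at hv
    rw [hrep.infM] at hmm
    simp only [Submodule.mem_bot] at hv hmm
    rw [Prod.mk.injEq]
    exact ⟨hv, hmm⟩
  -- α_even
  · intro i x hx
    rw [Submodule.mem_prod] at hx
    rw [LinearMap.prodMap_apply, Submodule.mem_prod]
    exact ⟨halg.α_even i x.1 hx.1, hrep.αM_even i x.2 hx.2⟩
  -- β_even
  · intro i x hx
    rw [Submodule.mem_prod] at hx
    rw [LinearMap.prodMap_apply, Submodule.mem_prod]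
    exact ⟨halg.β_even i x.1 hx.1, hrep.βM_even i x.2 hx.2⟩
  -- br_grade
  · rintro i j k ⟨u, x⟩ hp ⟨v, y⟩ hq ⟨w, z⟩ hr
    rw [Submodule.mem_prod] at hp hq hr
    rw [hBr i j k u v w x y z hp.1 hp.2 hq.1 hq.2 hr.1 hr.2, Submodule.mem_prod]
    refine ⟨halg.br_grade i j k u hp.1 v hq.1 w hr.1, hBigMem _ _ _ _ _ _ _
      (hcoc.θeven i j k u hp.1 v hq.1 w hr.1)
      (hrep.ρeven i j k u hp.1 v hq.1 z hr.2)
      (hGcast _ _ _ (by ring) (hrep.ρeven i k j u hp.1 (αi (β w))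
        (hαiG k _ (halg.β_even k w hr.1)) (αM (βMi y)) (hrep.αM_even j _ (hβMiG j y hq.2))))
      (hGcast _ _ _ (by ring) (hrep.ρeven j k i v hq.1 (αi (β w))
        (hαiG k _ (halg.β_even k w hr.1)) (αM (βMi x)) (hrep.αM_even i _ (hβMiG i x hp.2))))⟩
  -- comm
  · intro p
    simp only [LinearMap.prodMap_apply, halg.comm, hrep.commM]
  -- mult_α
  · intro p q r
    obtain ⟨p₀, p₁, hp₀, hp₁, rfl⟩ := hdecP p
    obtain ⟨q₀, q₁, hq₀, hq₁, rfl⟩ := hdecP q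
    obtain ⟨r₀, r₁, hr₀, hr₁, rfl⟩ := hdecP r
    simp only [hadd₁, hadd₂, hadd₃, map_add]
    rw [hkeyα 0 0 0 _ _ _ hp₀ hq₀ hr₀, hkeyα 0 0 1 _ _ _ hp₀ hq₀ hr₁,
      hkeyα 0 1 0 _ _ _ hp₀ hq₁ hr₀, hkeyα 0 1 1 _ _ _ hp₀ hq₁ hr₁,
      hkeyα 1 0 0 _ _ _ hp₁ hq₀ hr₀, hkeyα 1 0 1 _ _ _ hp₁ hq₀ hr₁,
      hkeyα 1 1 0 _ _ _ hp₁ hq₁ hr₀, hkeyα 1 1 1 _ _ _ hp₁ hq₁ hr₁]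
  -- mult_β
  · intro p q r
    obtain ⟨p₀, p₁, hp₀, hp₁, rfl⟩ := hdecP p
    obtain ⟨q₀, q₁, hq₀, hq₁, rfl⟩ := hdecP q
    obtain ⟨r₀, r₁, hr₀, hr₁, rfl⟩ := hdecP r
    simp only [hadd₁, hadd₂, hadd₃, map_add]
    rw [hkeyβ 0 0 0 _ _ _ hp₀ hq₀ hr₀, hkeyβ 0 0 1 _ _ _ hp₀ hq₀ hr₁,
      hkeyβ 0 1 0 _ _ _ hp₀ hq₁ hr₀, hkeyβ 0 1 1 _ _ _ hp₀ hq₁ hr₁,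
      hkeyβ 1 0 0 _ _ _ hp₁ hq₀ hr₀, hkeyβ 1 0 1 _ _ _ hp₁ hq₀ hr₁,
      hkeyβ 1 1 0 _ _ _ hp₁ hq₁ hr₀, hkeyβ 1 1 1 _ _ _ hp₁ hq₁ hr₁]
  -- skew₁
  · intro i j p hp q hq r
    obtain ⟨r₀, r₁, hr₀, hr₁, rfl⟩ := hdecP r
    simp only [map_add, hadd₃, smul_add]
    rw [hskew₁key i j 0 p q r₀ hp hq hr₀, hskew₁key i j 1 p q r₁ hp hq hr₁]
  -- skew₂
  · intro j k q hq r hr p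
    obtain ⟨p₀, p₁, hp₀, hp₁, rfl⟩ := hdecP p
    simp only [map_add, hadd₁, smul_add]
    rw [hskew₂key 0 j k p₀ q r hp₀ hq hr, hskew₂key 1 j k p₁ q r hp₁ hq hr]
  -- jacobi
  · rintro i₁ i₂ i₃ i₄ i₅ ⟨x₁, m₁⟩ hX₁ ⟨x₂, m₂⟩ hX₂ ⟨x₃, m₃⟩ hX₃ ⟨x₄, m₄⟩ hX₄ ⟨x₅, m₅⟩ hX₅
    rw [Submodule.mem_prod] at hX₁ hX₂ hX₃ hX₄ hX₅
    obtain ⟨hx₁, hm₁⟩ := hX₁; obtain ⟨hx₂, hm₂⟩ := hX₂; obtain ⟨hx₃, hm₃⟩ := hX₃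
    obtain ⟨hx₄, hm₄⟩ := hX₄; obtain ⟨hx₅, hm₅⟩ := hX₅
    -- basic memberships
    have hbx₁ := halg.β_even i₁ x₁ hx₁
    have hbx₂ := halg.β_even i₂ x₂ hx₂
    have hbx₃ := halg.β_even i₃ x₃ hx₃
    have hbx₄ := halg.β_even i₄ x₄ hx₄
    have hbx₅ := halg.β_even i₅ x₅ hx₅
    have hbbx₁ := halg.β_even i₁ _ hbx₁
    have hbbx₂ := halg.β_even i₂ _ hbx₂
    have hbbx₃ := halg.β_even i₃ _ hbx₃
    have hbbx₄ := halg.β_even i₄ _ hbx₄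
    have hbbx₅ := halg.β_even i₅ _ hbx₅
    have hax₃ := halg.α_even i₃ x₃ hx₃
    have hax₄ := halg.α_even i₄ x₄ hx₄
    have hax₅ := halg.α_even i₅ x₅ hx₅
    have hbm₁ := hrep.βM_even i₁ m₁ hm₁
    have hbm₂ := hrep.βM_even i₂ m₂ hm₂
    have hbm₃ := hrep.βM_even i₃ m₃ hm₃
    have hbm₄ := hrep.βM_even i₄ m₄ hm₄
    have hbm₅ := hrep.βM_even i₅ m₅ hm₅
    have hbbm₁ := hrep.βM_even i₁ _ hbm₁
    have hbbm₂ := hrep.βM_even i₂ _ hbm₂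
    have hbbm₃ := hrep.βM_even i₃ _ hbm₃
    have hbbm₄ := hrep.βM_even i₄ _ hbm₄
    have hbbm₅ := hrep.βM_even i₅ _ hbm₅
    have ham₃ := hrep.αM_even i₃ m₃ hm₃
    have ham₄ := hrep.αM_even i₄ m₄ hm₄
    have ham₅ := hrep.αM_even i₅ m₅ hm₅
    have hy₁ : αi (β x₁) ∈ G i₁ := hαiG i₁ _ hbx₁
    have hy₂ : αi (β x₂) ∈ G i₂ := hαiG i₂ _ hbx₂
    have hy₃ : αi (β x₃) ∈ G i₃ := hαiG i₃ _ hbx₃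
    have hy₄ : αi (β x₄) ∈ G i₄ := hαiG i₄ _ hbx₄
    have hby₁ : β (αi (β x₁)) ∈ G i₁ := halg.β_even i₁ _ hy₁
    have hby₂ : β (αi (β x₂)) ∈ G i₂ := halg.β_even i₂ _ hy₂
    have hby₃ : β (αi (β x₃)) ∈ G i₃ := halg.β_even i₃ _ hy₃
    have hby₄ : β (αi (β x₄)) ∈ G i₄ := halg.β_even i₄ _ hy₄
    have hP345m : br (β (αi (β x₃))) (β (αi (β x₄))) (β x₅) ∈ G (i₃ + i₄ + i₅) :=
      halg.br_grade i₃ i₄ i₅ _ hby₃ _ hby₄ _ hbx₅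
    have hP123m : br (β (αi (β x₁))) (β (αi (β x₂))) (β x₃) ∈ G (i₁ + i₂ + i₃) :=
      halg.br_grade i₁ i₂ i₃ _ hby₁ _ hby₂ _ hbx₃
    have hP124m : br (β (αi (β x₁))) (β (αi (β x₂))) (β x₄) ∈ G (i₁ + i₂ + i₄) :=
      halg.br_grade i₁ i₂ i₄ _ hby₁ _ hby₂ _ hbx₄
    have hP125m : br (β (αi (β x₁))) (β (αi (β x₂))) (β x₅) ∈ G (i₁ + i₂ + i₅) :=
      halg.br_grade i₁ i₂ i₅ _ hby₁ _ hby₂ _ hbx₅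
    -- the ρ-blocks
    have e3 := h3' i₁ i₂ i₄ i₅ (αi (β x₁)) (αi (β x₂)) (β x₄) (β x₅) hy₁ hy₂ hbx₄ hbx₅ (αM m₃)
    have e4 := h3' i₁ i₂ i₃ i₅ (αi (β x₁)) (αi (β x₂)) (β x₃) (β x₅) hy₁ hy₂ hbx₃ hbx₅ (αM m₄)
    have e5 := h3' i₁ i₂ i₃ i₄ (αi (β x₁)) (αi (β x₂)) (β x₃) (β x₄) hy₁ hy₂ hbx₃ hbx₄ (αM m₅)
    simp only [hαβαi, hαi₁, hcommM] at e3 e4 e5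
    rw [hflip (i₁ + i₂ + i₄) i₅ _ hP124m _ hbbx₅ (αM (βM m₃))] at e3
    rw [hflip (i₁ + i₂ + i₃) i₅ _ hP123m _ hbbx₅ (αM (βM m₄))] at e4
    rw [hflip (i₁ + i₂ + i₃) i₄ _ hP123m _ hbbx₄ (αM (βM m₅))] at e5
    have f1 := h4' i₃ i₄ i₅ i₂ (αi (β x₃)) (αi (β x₄)) (β x₅) (β x₂) hy₃ hy₄ hbx₅ hbx₂ (αM m₁)
    simp only [hαβαi, hαi₁, hcommM] at f1
    rw [hflip i₅ i₃ _ hbbx₅ _ hbbx₃ (ρ (β x₄) (β x₂) (αM m₁)),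
      hflipIn (β (β x₄)) (β (β x₅)) i₃ i₂ (β x₃) (β x₂) hbx₃ hbx₂ (αM m₁),
      hflipIn (β (β x₃)) (β (β x₅)) i₄ i₂ (β x₄) (β x₂) hbx₄ hbx₂ (αM m₁),
      hflipIn (β (β x₃)) (β (β x₄)) i₅ i₂ (β x₅) (β x₂) hbx₅ hbx₂ (αM m₁)] at f1
    have F1 := hflip i₂ (i₃ + i₄ + i₅) (β (β x₂)) hbbx₂ _ hP345m (αM (βM m₁))
    rw [f1] at F1
    have f2 := h4' i₃ i₄ i₅ i₁ (αi (β x₃)) (αi (β x₄)) (β x₅) (β x₁) hy₃ hy₄ hbx₅ hbx₁ (αM m₂)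
    simp only [hαβαi, hαi₁, hcommM] at f2
    rw [hflip i₅ i₃ _ hbbx₅ _ hbbx₃ (ρ (β x₄) (β x₁) (αM m₂)),
      hflipIn (β (β x₄)) (β (β x₅)) i₃ i₁ (β x₃) (β x₁) hbx₃ hbx₁ (αM m₂),
      hflipIn (β (β x₃)) (β (β x₅)) i₄ i₁ (β x₄) (β x₁) hbx₄ hbx₁ (αM m₂),
      hflipIn (β (β x₃)) (β (β x₄)) i₅ i₁ (β x₅) (β x₁) hbx₅ hbx₁ (αM m₂)] at f2
    have F2 := hflip i₁ (i₃ + i₄ + i₅) (β (β x₁)) hbbx₁ _ hP345m (αM (βM m₂))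
    rw [f2] at F2
    have hC := hcoc.cocycle i₁ i₂ i₃ i₄ i₅ x₁ hx₁ x₂ hx₂ x₃ hx₃ x₄ hx₄ x₅ hx₅
    -- expand the goal
    simp only [LinearMap.prodMap_apply]
    rw [hBr i₃ i₄ i₅ (β x₃) (β x₄) (α x₅) (βM m₃) (βM m₄) (αM m₅)
        hbx₃ hbm₃ hbx₄ hbm₄ hax₅ ham₅,
      hBr i₁ i₂ i₃ (β x₁) (β x₂) (α x₃) (βM m₁) (βM m₂) (αM m₃)
        hbx₁ hbm₁ hbx₂ hbm₂ hax₃ ham₃,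
      hBr i₁ i₂ i₄ (β x₁) (β x₂) (α x₄) (βM m₁) (βM m₂) (αM m₄)
        hbx₁ hbm₁ hbx₂ hbm₂ hax₄ ham₄,
      hBr i₁ i₂ i₅ (β x₁) (β x₂) (α x₅) (βM m₁) (βM m₂) (αM m₅)
        hbx₁ hbm₁ hbx₂ hbm₂ hax₅ ham₅]
    simp only [hαβα, hβMi₂]
    rw [hBr i₁ i₂ (i₃ + i₄ + i₅) _ _ _ _ _ _ hbbx₁ hbbm₁ hbbx₂ hbbm₂
        (halg.br_grade i₃ i₄ i₅ _ hbx₃ _ hbx₄ _ hax₅)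
        (hBIG i₃ i₄ i₅ x₃ x₄ x₅ m₃ m₄ m₅ hx₃ hx₄ hx₅ hm₃ hm₄ hm₅),
      hBr i₄ i₅ (i₁ + i₂ + i₃) _ _ _ _ _ _ hbbx₄ hbbm₄ hbbx₅ hbbm₅
        (halg.br_grade i₁ i₂ i₃ _ hbx₁ _ hbx₂ _ hax₃)
        (hBIG i₁ i₂ i₃ x₁ x₂ x₃ m₁ m₂ m₃ hx₁ hx₂ hx₃ hm₁ hm₂ hm₃),
      hBr i₃ i₅ (i₁ + i₂ + i₄) _ _ _ _ _ _ hbbx₃ hbbm₃ hbbx₅ hbbm₅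
        (halg.br_grade i₁ i₂ i₄ _ hbx₁ _ hbx₂ _ hax₄)
        (hBIG i₁ i₂ i₄ x₁ x₂ x₄ m₁ m₂ m₄ hx₁ hx₂ hx₄ hm₁ hm₂ hm₄),
      hBr i₃ i₄ (i₁ + i₂ + i₅) _ _ _ _ _ _ hbbx₃ hbbm₃ hbbx₄ hbbm₄
        (halg.br_grade i₁ i₂ i₅ _ hbx₁ _ hbx₂ _ hax₅)
        (hBIG i₁ i₂ i₅ x₁ x₂ x₅ m₁ m₂ m₅ hx₁ hx₂ hx₅ hm₁ hm₂ hm₅)]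
    simp only [hβMi₂, hPgen, Prod.smul_mk, Prod.mk_sub_mk, Prod.mk_add_mk, Prod.mk.injEq]
    refine ⟨halg.jacobi i₁ i₂ i₃ i₄ i₅ x₁ hx₁ x₂ hx₂ x₃ hx₃ x₄ hx₄ x₅ hx₅, ?_⟩
    simp only [map_add, map_sub, map_smul]
    have e3s := congrArg (HSMul.hSMul ((-1 : 𝕜) ^ (i₃.val * (i₄.val + i₅.val)))) e3
    have e4s := congrArg (HSMul.hSMul (-(-1 : 𝕜) ^ (i₄.val * i₅.val))) e4
    have F1s := congrArg
      (HSMul.hSMul ((-1 : 𝕜) ^ (i₁.val * (i₂.val + ((i₃ : ZMod 2) + i₄ + i₅).val)))) F1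
    have F2s := congrArg (HSMul.hSMul (-(-1 : 𝕜) ^ (i₂.val * ((i₃ : ZMod 2) + i₄ + i₅).val))) F2
    rcases htwo i₁ with rfl | rfl <;> rcases htwo i₂ with rfl | rfl <;>
      rcases htwo i₃ with rfl | rfl <;> rcases htwo i₄ with rfl | rfl <;>
      rcases htwo i₅ with rfl | rfl <;>
      linear_combination (norm :=
        (simp only [show ((0 : ZMod 2)).val = 0 from rfl, show ((1 : ZMod 2)).val = 1 from rfl,
          show ((0 : ZMod 2) + 0 + 0).val = 0 from rfl, show ((0 : ZMod 2) + 0 + 1).val = 1 from rfl,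
          show ((0 : ZMod 2) + 1 + 0).val = 1 from rfl, show ((0 : ZMod 2) + 1 + 1).val = 0 from rfl,
          show ((1 : ZMod 2) + 0 + 0).val = 1 from rfl, show ((1 : ZMod 2) + 0 + 1).val = 0 from rfl,
          show ((1 : ZMod 2) + 1 + 0).val = 0 from rfl, show ((1 : ZMod 2) + 1 + 1).val = 1 from rfl];
          module))
        hC + e5 + e4s + e3s + F1s + F2s
end

section
/- Let (g, [·,·,·], α, β) be a 3-BiHom-Lie superalgebra with α, β surjective (bijective), (M, ρ, α_M, β_M) a representation, and f : g → M an even linear map with f∘α = α_M∘f and f∘β = β_M∘f. Then the trilinear map θ_f(x,y,z) = f([x,y,z]) - ρ(x,y)f(z) + (-1)^{|y||z|} ρ(x, α^{-1}β(z)) f(αβ^{-1}(y)) - (-1)^{(|y|+|z|)|x|} ρ(y, α^{-1}β(z)) f(αβ^{-1}(x)) is a 3-cocycle associated with ρ. -/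
set_option maxHeartbeats 8000000 in
/-- Coboundary-type 3-cocycle: if `f : g → M` is an even linear map intertwining the
structure maps (`f∘α = α_M∘f`, `f∘β = β_M∘f`), with `α, β` invertible, then any trilinear
map `Θ` which on homogeneous elements is given by
`θ_f(x,y,z) = f([x,y,z]) − ρ(x,y)f(z) + (−1)^{|y||z|}ρ(x,α⁻¹β z)f(αβ⁻¹ y)
  − (−1)^{(|y|+|z|)|x|}ρ(y,α⁻¹β z)f(αβ⁻¹ x)`
is a 3-cocycle associated with `ρ`. -/
theorem statement11 {𝕜 V M : Type*} [Field 𝕜] [AddCommGroup V] [Module 𝕜 V]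
    [AddCommGroup M] [Module 𝕜 M]
    (G : ZMod 2 → Submodule 𝕜 V) (br : V → V → V → V) (α β : V →ₗ[𝕜] V)
    (GM : ZMod 2 → Submodule 𝕜 M) (ρ : V → V → M →ₗ[𝕜] M) (αM βM : M →ₗ[𝕜] M)
    (halg : Is3BiHomLieSuper 𝕜 G br α β)
    (hrep : IsRep3 𝕜 G br α β GM ρ αM βM)
    (hαsurj : Function.Surjective α) (hβsurj : Function.Surjective β)
    (αi : V →ₗ[𝕜] V) (hαi₁ : ∀ x, α (αi x) = x) (hαi₂ : ∀ x, αi (α x) = x)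
    (βi : V →ₗ[𝕜] V) (hβi₁ : ∀ x, β (βi x) = x) (hβi₂ : ∀ x, βi (β x) = x)
    (f : V →ₗ[𝕜] M)
    (hfe : ∀ i, ∀ x ∈ G i, f x ∈ GM i)
    (hfα : ∀ x, f (α x) = αM (f x)) (hfβ : ∀ x, f (β x) = βM (f x))
    (Θ : V → V → V → M)
    (hadd₁ : ∀ x x' y z, Θ (x + x') y z = Θ x y z + Θ x' y z)
    (hsmul₁ : ∀ (c : 𝕜) x y z, Θ (c • x) y z = c • Θ x y z)
    (hadd₂ : ∀ x y y' z, Θ x (y + y') z = Θ x y z + Θ x y' z)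
    (hsmul₂ : ∀ (c : 𝕜) x y z, Θ x (c • y) z = c • Θ x y z)
    (hadd₃ : ∀ x y z z', Θ x y (z + z') = Θ x y z + Θ x y z')
    (hsmul₃ : ∀ (c : 𝕜) x y z, Θ x y (c • z) = c • Θ x y z)
    (hΘ : ∀ (i j k : ZMod 2), ∀ x ∈ G i, ∀ y ∈ G j, ∀ z ∈ G k,
      Θ x y z =
        f (br x y z) - ρ x y (f z) +
          (-1 : 𝕜) ^ (j.val * k.val) • ρ x (αi (β z)) (f (α (βi y))) -
          (-1 : 𝕜) ^ ((j.val + k.val) * i.val) • ρ y (αi (β z)) (f (α (βi x)))) :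
    Is3Cocycle 𝕜 G br α β GM ρ αM βM Θ := by
  
  have htwo : ∀ j : ZMod 2, j = 0 ∨ j = 1 := by decide
  have hc1 : ∀ t, α (β t) = β (α t) := halg.comm
  have hinjα : ∀ a b : V, α a = α b → a = b := fun a b h => by rw [← hαi₂ a, h, hαi₂]
  have hinjβ : ∀ a b : V, β a = β b → a = b := fun a b h => by rw [← hβi₂ a, h, hβi₂]
  have hc2 : ∀ t, αi (β t) = β (αi t) := fun t => hinjα _ _ (by rw [hαi₁, hc1, hαi₁])
  have hc3 : ∀ t, α (βi t) = βi (α t) := fun t => hinjβ _ _ (by rw [← hc1, hβi₁, hβi₁])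
  have habr : ∀ x y z, αi (br x y z) = br (αi x) (αi y) (αi z) := fun x y z =>
    hinjα _ _ (by rw [hαi₁, halg.mult_α, hαi₁, hαi₁, hαi₁])
  have hdec : ∀ v : V, ∃ v0 ∈ G 0, ∃ v1 ∈ G 1, v = v0 + v1 := by
    intro v
    have hv : v ∈ G 0 ⊔ G 1 := by rw [halg.sup_top]; trivial
    rcases Submodule.mem_sup.mp hv with ⟨v0, h0, v1, h1, h⟩
    exact ⟨v0, h0, v1, h1, h.symm⟩
  have hkey : ∀ (γ γi : V →ₗ[𝕜] V), (∀ t, γ (γi t) = t) → (∀ t, γi (γ t) = t) →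
      (∀ i, ∀ x ∈ G i, γ x ∈ G i) → ∀ i x, x ∈ G i → γi x ∈ G i := by
    intro γ γi hg1 hg2 hge i x hx
    obtain ⟨v0, h0, v1, h1, hv⟩ := hdec (γi x)
    have hxv : x = γ v0 + γ v1 := by rw [← hg1 x, hv, map_add]
    have hznn : ∀ w, γ w = 0 → w = 0 := fun w h => by rw [← hg2 w, h, map_zero]
    rcases htwo i with rfl | rfl
    · have e : γ v1 = x - γ v0 := by rw [hxv]; abel
      have hmem : γ v1 ∈ G 0 ⊓ G 1 :=
        ⟨by rw [e]; exact Submodule.sub_mem _ hx (hge 0 v0 h0), hge 1 v1 h1⟩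
      rw [halg.inf_bot] at hmem
      have hv1 : v1 = 0 := hznn _ ((Submodule.mem_bot 𝕜).mp hmem)
      rw [hv, hv1, add_zero]; exact h0
    · have e : γ v0 = x - γ v1 := by rw [hxv]; abel
      have hmem : γ v0 ∈ G 0 ⊓ G 1 :=
        ⟨hge 0 v0 h0, by rw [e]; exact Submodule.sub_mem _ hx (hge 1 v1 h1)⟩
      rw [halg.inf_bot] at hmem
      have hv0 : v0 = 0 := hznn _ ((Submodule.mem_bot 𝕜).mp hmem)
      rw [hv, hv0, zero_add]; exact h1
  have hGai : ∀ i x, x ∈ G i → αi x ∈ G i := hkey α αi hαi₁ hαi₂ halg.α_even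
  have hGbi : ∀ i x, x ∈ G i → βi x ∈ G i := hkey β βi hβi₁ hβi₂ halg.β_even
  have hfα' : ∀ t, αM (f t) = f (α t) := fun t => (hfα t).symm
  have hfβ' : ∀ t, βM (f t) = f (β t) := fun t => (hfβ t).symm
  have hrepα : ∀ u v m, αM (ρ u v m) = ρ (α u) (α v) (αM m) := by
    intro u v m
    have h := LinearMap.congr_fun (hrep.rep₁ u v) m
    simp only [LinearMap.comp_apply] at h
    exact h.symm
  have hrepβ : ∀ u v m, βM (ρ u v m) = ρ (β u) (β v) (βM m) := by
    intro u v m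
    have h := LinearMap.congr_fun (hrep.rep₂ u v) m
    simp only [LinearMap.comp_apply] at h
    exact h.symm
  refine ⟨hadd₁, hsmul₁, hadd₂, hsmul₂, hadd₃, hsmul₃, ?_, ?_, ?_, ?_, ?_, ?_⟩
  · -- θeven
    intro i j k x hx y hy z hz
    rw [hΘ i j k x hx y hy z hz]
    have hk1 : i + k + j = i + j + k := by ring
    have hk2 : j + k + i = i + j + k := by ring
    have m1 : f (br x y z) ∈ GM (i + j + k) := hfe _ _ (halg.br_grade i j k x hx y hy z hz)
    have m2 : ρ x y (f z) ∈ GM (i + j + k) := hrep.ρeven i j k x hx y hy _ (hfe k z hz)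
    have m3 : ρ x (αi (β z)) (f (α (βi y))) ∈ GM (i + j + k) := by
      rw [← hk1]
      exact hrep.ρeven i k j x hx _ (hGai k _ (halg.β_even k z hz)) _
        (hfe j _ (halg.α_even j _ (hGbi j y hy)))
    have m4 : ρ y (αi (β z)) (f (α (βi x))) ∈ GM (i + j + k) := by
      rw [← hk2]
      exact hrep.ρeven j k i y hy _ (hGai k _ (halg.β_even k z hz)) _
        (hfe i _ (halg.α_even i _ (hGbi i x hx)))
    exact Submodule.sub_mem _ (Submodule.add_mem _ (Submodule.sub_mem _ m1 m2)
      (Submodule.smul_mem _ _ m3)) (Submodule.smul_mem _ _ m4)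
  · -- equiv_α
    have key : ∀ (i j k : ZMod 2) x, x ∈ G i → ∀ y, y ∈ G j → ∀ z, z ∈ G k →
        αM (Θ x y z) = Θ (α x) (α y) (α z) := by
      intro i j k x hx y hy z hz
      rw [hΘ i j k x hx y hy z hz, hΘ i j k (α x) (halg.α_even i x hx) (α y)
        (halg.α_even j y hy) (α z) (halg.α_even k z hz)]
      simp only [map_add, map_sub, map_smul, hrepα, hfα', hc1, hc2, hc3, hαi₁, hαi₂,
        hβi₁, hβi₂, habr, halg.mult_α, halg.mult_β]
    intro x y z
    obtain ⟨x0, hx0, x1, hx1, rfl⟩ := hdec x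
    obtain ⟨y0, hy0, y1, hy1, rfl⟩ := hdec y
    obtain ⟨z0, hz0, z1, hz1, rfl⟩ := hdec z
    simp only [hadd₁, hadd₂, hadd₃, map_add]
    rw [key 0 0 0 x0 hx0 y0 hy0 z0 hz0, key 0 0 1 x0 hx0 y0 hy0 z1 hz1,
      key 0 1 0 x0 hx0 y1 hy1 z0 hz0, key 0 1 1 x0 hx0 y1 hy1 z1 hz1,
      key 1 0 0 x1 hx1 y0 hy0 z0 hz0, key 1 0 1 x1 hx1 y0 hy0 z1 hz1,
      key 1 1 0 x1 hx1 y1 hy1 z0 hz0, key 1 1 1 x1 hx1 y1 hy1 z1 hz1]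
  · -- equiv_β
    have key : ∀ (i j k : ZMod 2) x, x ∈ G i → ∀ y, y ∈ G j → ∀ z, z ∈ G k →
        βM (Θ x y z) = Θ (β x) (β y) (β z) := by
      intro i j k x hx y hy z hz
      rw [hΘ i j k x hx y hy z hz, hΘ i j k (β x) (halg.β_even i x hx) (β y)
        (halg.β_even j y hy) (β z) (halg.β_even k z hz)]
      simp only [map_add, map_sub, map_smul, hrepβ, hfβ', hc1, hc2, hc3, hαi₁, hαi₂,
        hβi₁, hβi₂, habr, halg.mult_α, halg.mult_β]
    intro x y z
    obtain ⟨x0, hx0, x1, hx1, rfl⟩ := hdec x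
    obtain ⟨y0, hy0, y1, hy1, rfl⟩ := hdec y
    obtain ⟨z0, hz0, z1, hz1, rfl⟩ := hdec z
    simp only [hadd₁, hadd₂, hadd₃, map_add]
    rw [key 0 0 0 x0 hx0 y0 hy0 z0 hz0, key 0 0 1 x0 hx0 y0 hy0 z1 hz1,
      key 0 1 0 x0 hx0 y1 hy1 z0 hz0, key 0 1 1 x0 hx0 y1 hy1 z1 hz1,
      key 1 0 0 x1 hx1 y0 hy0 z0 hz0, key 1 0 1 x1 hx1 y0 hy0 z1 hz1,
      key 1 1 0 x1 hx1 y1 hy1 z0 hz0, key 1 1 1 x1 hx1 y1 hy1 z1 hz1]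
  · -- cskew₁
    intro i j x hx y hy z
    have hbx : β x ∈ G i := halg.β_even i x hx
    have hby : β y ∈ G j := halg.β_even j y hy
    have key : ∀ (k : ZMod 2) z, z ∈ G k →
        Θ (β x) (β y) (α z) = -((-1 : 𝕜) ^ (i.val * j.val)) • Θ (β y) (β x) (α z) := by
      intro k z hz
      have haz : α z ∈ G k := halg.α_even k z hz
      rw [hΘ i j k (β x) hbx (β y) hby (α z) haz, hΘ j i k (β y) hby (β x) hbx (α z) haz]
      have H1 := congrArg f (halg.skew₁ i j x hx y hy z)
      have H2 := LinearMap.congr_fun (hrep.ρskew i j (β x) hbx (β y) hby) (f (α z))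
      simp only [map_smul, LinearMap.smul_apply, hc1, hc2, hc3, hαi₁, hαi₂, hβi₁, hβi₂] at H1 H2 ⊢
      linear_combination (norm := match_scalars <;>
        (rcases htwo i with rfl | rfl <;> rcases htwo j with rfl | rfl <;>
         rcases htwo k with rfl | rfl <;>
         norm_num [ZMod.val_add, ZMod.val_one, ZMod.val_zero])) H1 - H2
    obtain ⟨z0, hz0, z1, hz1, rfl⟩ := hdec z
    rw [map_add, hadd₃, hadd₃, key 0 z0 hz0, key 1 z1 hz1, smul_add]
  · -- cskew₂
    intro j k y hy z hz x
    have hby : β y ∈ G j := halg.β_even j y hy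
    have hbz : β z ∈ G k := halg.β_even k z hz
    have key : ∀ (i : ZMod 2) x, x ∈ G i →
        Θ (β x) (β y) (α z) = -((-1 : 𝕜) ^ (j.val * k.val)) • Θ (β x) (β z) (α y) := by
      intro i x hx
      have hbx : β x ∈ G i := halg.β_even i x hx
      have haz : α z ∈ G k := halg.α_even k z hz
      have hay : α y ∈ G j := halg.α_even j y hy
      rw [hΘ i j k (β x) hbx (β y) hby (α z) haz, hΘ i k j (β x) hbx (β z) hbz (α y) hay]
      have H1 := congrArg f (halg.skew₂ j k y hy z hz x)
      have H2 := LinearMap.congr_fun (hrep.ρskew j k (β y) hby (β z) hbz) (f (α x))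
      simp only [map_smul, LinearMap.smul_apply, hc1, hc2, hc3, hαi₁, hαi₂, hβi₁, hβi₂] at H1 H2 ⊢
      linear_combination (norm := match_scalars <;>
        (rcases htwo i with rfl | rfl <;> rcases htwo j with rfl | rfl <;>
         rcases htwo k with rfl | rfl <;>
         norm_num [ZMod.val_add, ZMod.val_one, ZMod.val_zero]))
        H1 + (-(-1 : 𝕜) ^ ((j.val + k.val) * i.val)) • H2
    obtain ⟨x0, hx0, x1, hx1, rfl⟩ := hdec x
    rw [map_add, hadd₁, hadd₁, key 0 x0 hx0, key 1 x1 hx1, smul_add]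
  · -- cocycle
    intro i1 i2 i3 i4 i5 x1 hx1 x2 hx2 x3 hx3 x4 hx4 x5 hx5
    have hb1 : β x1 ∈ G i1 := halg.β_even i1 x1 hx1
    have hbb1 : β (β x1) ∈ G i1 := halg.β_even i1 _ hb1
    have ha1 : α x1 ∈ G i1 := halg.α_even i1 x1 hx1
    have hai1 : αi x1 ∈ G i1 := hGai i1 x1 hx1
    have hbai1 : β (αi x1) ∈ G i1 := halg.β_even i1 _ hai1
    have hb2 : β x2 ∈ G i2 := halg.β_even i2 x2 hx2
    have hbb2 : β (β x2) ∈ G i2 := halg.β_even i2 _ hb2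
    have ha2 : α x2 ∈ G i2 := halg.α_even i2 x2 hx2
    have hai2 : αi x2 ∈ G i2 := hGai i2 x2 hx2
    have hbai2 : β (αi x2) ∈ G i2 := halg.β_even i2 _ hai2
    have hb3 : β x3 ∈ G i3 := halg.β_even i3 x3 hx3
    have hbb3 : β (β x3) ∈ G i3 := halg.β_even i3 _ hb3
    have ha3 : α x3 ∈ G i3 := halg.α_even i3 x3 hx3
    have hai3 : αi x3 ∈ G i3 := hGai i3 x3 hx3
    have hbai3 : β (αi x3) ∈ G i3 := halg.β_even i3 _ hai3
    have hb4 : β x4 ∈ G i4 := halg.β_even i4 x4 hx4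
    have hbb4 : β (β x4) ∈ G i4 := halg.β_even i4 _ hb4
    have ha4 : α x4 ∈ G i4 := halg.α_even i4 x4 hx4
    have hai4 : αi x4 ∈ G i4 := hGai i4 x4 hx4
    have hbai4 : β (αi x4) ∈ G i4 := halg.β_even i4 _ hai4
    have hb5 : β x5 ∈ G i5 := halg.β_even i5 x5 hx5
    have hbb5 : β (β x5) ∈ G i5 := halg.β_even i5 _ hb5
    have ha5 : α x5 ∈ G i5 := halg.α_even i5 x5 hx5
    have hai5 : αi x5 ∈ G i5 := hGai i5 x5 hx5
    have hbai5 : β (αi x5) ∈ G i5 := halg.β_even i5 _ hai5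
    have hBr134 : br (β (β (αi x1))) (β (β (αi x3))) (β x4) ∈ G (i1 + i3 + i4) := halg.br_grade i1 i3 i4 _ (halg.β_even i1 _ hbai1) _ (halg.β_even i3 _ hbai3) _ hb4
    have hBr135 : br (β (β (αi x1))) (β (β (αi x3))) (β x5) ∈ G (i1 + i3 + i5) := halg.br_grade i1 i3 i5 _ (halg.β_even i1 _ hbai1) _ (halg.β_even i3 _ hbai3) _ hb5
    have hBr145 : br (β (β (αi x1))) (β (β (αi x4))) (β x5) ∈ G (i1 + i4 + i5) := halg.br_grade i1 i4 i5 _ (halg.β_even i1 _ hbai1) _ (halg.β_even i4 _ hbai4) _ hb5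
    have hBr245 : br (β (β (αi x2))) (β (β (αi x4))) (β x5) ∈ G (i2 + i4 + i5) := halg.br_grade i2 i4 i5 _ (halg.β_even i2 _ hbai2) _ (halg.β_even i4 _ hbai4) _ hb5
    have hg345 : br (β x3) (β x4) (α x5) ∈ G (i3 + i4 + i5) := halg.br_grade i3 i4 i5 _ hb3 _ hb4 _ ha5
    have hg123 : br (β x1) (β x2) (α x3) ∈ G (i1 + i2 + i3) := halg.br_grade i1 i2 i3 _ hb1 _ hb2 _ ha3
    have hg124 : br (β x1) (β x2) (α x4) ∈ G (i1 + i2 + i4) := halg.br_grade i1 i2 i4 _ hb1 _ hb2 _ ha4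
    have hg125 : br (β x1) (β x2) (α x5) ∈ G (i1 + i2 + i5) := halg.br_grade i1 i2 i5 _ hb1 _ hb2 _ ha5
    have H0 := congrArg (fun t => ρ t (β (β x2)) (f (β (α x5)))) (halg.skew₂ i3 i4 (β (αi x3)) hbai3 (β (αi x4)) hbai4 (β (αi x1)))
    have H1 := congrArg (fun t => ρ t (β (β x2)) (f (β (α x4)))) (halg.skew₂ i3 i5 (β (αi x3)) hbai3 (β (αi x5)) hbai5 (β (αi x1)))
    have H2 := congrArg (fun t => ρ t (β (β x2)) (f (β (α x3)))) (halg.skew₂ i4 i5 (β (αi x4)) hbai4 (β (αi x5)) hbai5 (β (αi x1)))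
    have H3 := LinearMap.congr_fun (hrep.ρskew (i1 + i3 + i4) i2 (br (β (β (αi x1))) (β (β (αi x3))) (β x4)) hBr134 (β (β x2)) hbb2) (f (β (α x5)))
    have H4 := LinearMap.congr_fun (hrep.ρskew (i1 + i3 + i5) i2 (br (β (β (αi x1))) (β (β (αi x3))) (β x5)) hBr135 (β (β x2)) hbb2) (f (β (α x4)))
    have H5 := LinearMap.congr_fun (hrep.ρskew (i1 + i4 + i5) i2 (br (β (β (αi x1))) (β (β (αi x4))) (β x5)) hBr145 (β (β x2)) hbb2) (f (β (α x3)))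
    have H6 := LinearMap.congr_fun (hrep.ρskew (i1 + i4 + i5) i3 (br (β (β (αi x1))) (β (β (αi x4))) (β x5)) hBr145 (β (β x3)) hbb3) (f (β (α x2)))
    have H7 := LinearMap.congr_fun (hrep.ρskew (i2 + i4 + i5) i3 (br (β (β (αi x2))) (β (β (αi x4))) (β x5)) hBr245 (β (β x3)) hbb3) (f (β (α x1)))
    have H8 := congrArg f (halg.jacobi i1 i2 i3 i4 i5 x1 hx1 x2 hx2 x3 hx3 x4 hx4 x5 hx5)
    have H9 := LinearMap.congr_fun (hrep.rep₃ i1 i2 i3 i4 (β (αi x1)) hbai1 (β (αi x2)) hbai2 (β x3) hb3 (β x4) hb4) (f (α x5))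
    have H10 := LinearMap.congr_fun (hrep.rep₃ i1 i2 i3 i5 (β (αi x1)) hbai1 (β (αi x2)) hbai2 (β x3) hb3 (β x5) hb5) (f (α x4))
    have H11 := LinearMap.congr_fun (hrep.rep₃ i1 i2 i4 i3 (β (αi x1)) hbai1 (β (αi x2)) hbai2 (β x4) hb4 (β x3) hb3) (f (α x5))
    have H12 := LinearMap.congr_fun (hrep.rep₃ i1 i2 i4 i5 (β (αi x1)) hbai1 (β (αi x2)) hbai2 (β x4) hb4 (β x5) hb5) (f (α x3))
    have H13 := LinearMap.congr_fun (hrep.rep₃ i1 i2 i5 i3 (β (αi x1)) hbai1 (β (αi x2)) hbai2 (β x5) hb5 (β x3) hb3) (f (α x4))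
    have H14 := LinearMap.congr_fun (hrep.rep₃ i1 i2 i5 i4 (β (αi x1)) hbai1 (β (αi x2)) hbai2 (β x5) hb5 (β x4) hb4) (f (α x3))
    have H15 := LinearMap.congr_fun (hrep.rep₃ i1 i3 i2 i4 (β (αi x1)) hbai1 (β (αi x3)) hbai3 (β x2) hb2 (β x4) hb4) (f (α x5))
    have H16 := LinearMap.congr_fun (hrep.rep₃ i1 i3 i2 i5 (β (αi x1)) hbai1 (β (αi x3)) hbai3 (β x2) hb2 (β x5) hb5) (f (α x4))
    have H17 := LinearMap.congr_fun (hrep.rep₃ i1 i4 i2 i5 (β (αi x1)) hbai1 (β (αi x4)) hbai4 (β x2) hb2 (β x5) hb5) (f (α x3))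
    have H18 := LinearMap.congr_fun (hrep.rep₃ i1 i4 i3 i5 (β (αi x1)) hbai1 (β (αi x4)) hbai4 (β x3) hb3 (β x5) hb5) (f (α x2))
    have H19 := LinearMap.congr_fun (hrep.rep₃ i2 i4 i3 i5 (β (αi x2)) hbai2 (β (αi x4)) hbai4 (β x3) hb3 (β x5) hb5) (f (α x1))
    have H20 := LinearMap.congr_fun (hrep.rep₃ i3 i4 i1 i5 (β (αi x3)) hbai3 (β (αi x4)) hbai4 (β x1) hb1 (β x5) hb5) (f (α x2))
    have H21 := LinearMap.congr_fun (hrep.rep₃ i3 i4 i2 i5 (β (αi x3)) hbai3 (β (αi x4)) hbai4 (β x2) hb2 (β x5) hb5) (f (α x1))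
    have H22 := LinearMap.congr_fun (hrep.rep₄ i1 i2 i3 i4 (β (αi x1)) hbai1 (β (αi x2)) hbai2 (β x3) hb3 (β x4) hb4) (f (α x5))
    have H23 := LinearMap.congr_fun (hrep.rep₄ i1 i2 i3 i5 (β (αi x1)) hbai1 (β (αi x2)) hbai2 (β x3) hb3 (β x5) hb5) (f (α x4))
    have H24 := LinearMap.congr_fun (hrep.rep₄ i1 i2 i4 i3 (β (αi x1)) hbai1 (β (αi x2)) hbai2 (β x4) hb4 (β x3) hb3) (f (α x5))
    have H25 := LinearMap.congr_fun (hrep.rep₄ i1 i2 i4 i5 (β (αi x1)) hbai1 (β (αi x2)) hbai2 (β x4) hb4 (β x5) hb5) (f (α x3))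
    have H26 := LinearMap.congr_fun (hrep.rep₄ i1 i2 i5 i3 (β (αi x1)) hbai1 (β (αi x2)) hbai2 (β x5) hb5 (β x3) hb3) (f (α x4))
    have H27 := LinearMap.congr_fun (hrep.rep₄ i1 i2 i5 i4 (β (αi x1)) hbai1 (β (αi x2)) hbai2 (β x5) hb5 (β x4) hb4) (f (α x3))
    have H28 := LinearMap.congr_fun (hrep.rep₄ i1 i3 i2 i4 (β (αi x1)) hbai1 (β (αi x3)) hbai3 (β x2) hb2 (β x4) hb4) (f (α x5))
    have H29 := LinearMap.congr_fun (hrep.rep₄ i1 i3 i2 i5 (β (αi x1)) hbai1 (β (αi x3)) hbai3 (β x2) hb2 (β x5) hb5) (f (α x4))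
    have H30 := LinearMap.congr_fun (hrep.rep₄ i1 i4 i2 i5 (β (αi x1)) hbai1 (β (αi x4)) hbai4 (β x2) hb2 (β x5) hb5) (f (α x3))
    have H31 := LinearMap.congr_fun (hrep.rep₄ i1 i4 i3 i2 (β (αi x1)) hbai1 (β (αi x4)) hbai4 (β x3) hb3 (β x2) hb2) (f (α x5))
    have H32 := LinearMap.congr_fun (hrep.rep₄ i1 i4 i3 i5 (β (αi x1)) hbai1 (β (αi x4)) hbai4 (β x3) hb3 (β x5) hb5) (f (α x2))
    have H33 := LinearMap.congr_fun (hrep.rep₄ i1 i4 i5 i3 (β (αi x1)) hbai1 (β (αi x4)) hbai4 (β x5) hb5 (β x3) hb3) (f (α x2))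
    have H34 := LinearMap.congr_fun (hrep.rep₄ i1 i5 i3 i2 (β (αi x1)) hbai1 (β (αi x5)) hbai5 (β x3) hb3 (β x2) hb2) (f (α x4))
    have H35 := LinearMap.congr_fun (hrep.rep₄ i1 i5 i4 i2 (β (αi x1)) hbai1 (β (αi x5)) hbai5 (β x4) hb4 (β x2) hb2) (f (α x3))
    have H36 := LinearMap.congr_fun (hrep.rep₄ i2 i4 i3 i5 (β (αi x2)) hbai2 (β (αi x4)) hbai4 (β x3) hb3 (β x5) hb5) (f (α x1))
    have H37 := LinearMap.congr_fun (hrep.rep₄ i2 i4 i5 i3 (β (αi x2)) hbai2 (β (αi x4)) hbai4 (β x5) hb5 (β x3) hb3) (f (α x1))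
    have H38 := LinearMap.congr_fun (hrep.rep₄ i3 i4 i1 i5 (β (αi x3)) hbai3 (β (αi x4)) hbai4 (β x1) hb1 (β x5) hb5) (f (α x2))
    have H39 := LinearMap.congr_fun (hrep.rep₄ i3 i4 i2 i5 (β (αi x3)) hbai3 (β (αi x4)) hbai4 (β x2) hb2 (β x5) hb5) (f (α x1))
    have H40 := congrArg (fun t => ρ (β (β x1)) (β (β x3)) t) (LinearMap.congr_fun (hrep.ρskew i2 i4 (β x2) hb2 (β x4) hb4) (f (α x5)))
    have H41 := congrArg (fun t => ρ (β (β x1)) (β (β x3)) t) (LinearMap.congr_fun (hrep.ρskew i2 i5 (β x2) hb2 (β x5) hb5) (f (α x4)))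
    have H42 := congrArg (fun t => ρ (β (β x1)) (β (β x4)) t) (LinearMap.congr_fun (hrep.ρskew i2 i3 (β x2) hb2 (β x3) hb3) (f (α x5)))
    have H43 := congrArg (fun t => ρ (β (β x1)) (β (β x4)) t) (LinearMap.congr_fun (hrep.ρskew i2 i5 (β x2) hb2 (β x5) hb5) (f (α x3)))
    have H44 := congrArg (fun t => ρ (β (β x1)) (β (β x4)) t) (LinearMap.congr_fun (hrep.ρskew i3 i5 (β x3) hb3 (β x5) hb5) (f (α x2)))
    have H45 := congrArg (fun t => ρ (β (β x1)) (β (β x5)) t) (LinearMap.congr_fun (hrep.ρskew i2 i3 (β x2) hb2 (β x3) hb3) (f (α x4)))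
    have H46 := congrArg (fun t => ρ (β (β x1)) (β (β x5)) t) (LinearMap.congr_fun (hrep.ρskew i2 i4 (β x2) hb2 (β x4) hb4) (f (α x3)))
    have H47 := congrArg (fun t => ρ (β (β x1)) (β (β x5)) t) (LinearMap.congr_fun (hrep.ρskew i3 i4 (β x3) hb3 (β x4) hb4) (f (α x2)))
    have H48 := congrArg (fun t => ρ (β (β x2)) (β (β x4)) t) (LinearMap.congr_fun (hrep.ρskew i3 i5 (β x3) hb3 (β x5) hb5) (f (α x1)))
    have H49 := congrArg (fun t => ρ (β (β x2)) (β (β x5)) t) (LinearMap.congr_fun (hrep.ρskew i3 i4 (β x3) hb3 (β x4) hb4) (f (α x1)))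
    have H50 := LinearMap.congr_fun (hrep.ρskew i1 i2 (β (β x1)) hbb1 (β (β x2)) hbb2) (ρ (β x3) (β x4) (f (α x5)))
    have H51 := LinearMap.congr_fun (hrep.ρskew i1 i2 (β (β x1)) hbb1 (β (β x2)) hbb2) (ρ (β x3) (β x5) (f (α x4)))
    have H52 := LinearMap.congr_fun (hrep.ρskew i1 i2 (β (β x1)) hbb1 (β (β x2)) hbb2) (ρ (β x4) (β x5) (f (α x3)))
    have H53 := LinearMap.congr_fun (hrep.ρskew i1 i3 (β (β x1)) hbb1 (β (β x3)) hbb3) (ρ (β x2) (β x4) (f (α x5)))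
    have H54 := LinearMap.congr_fun (hrep.ρskew i1 i3 (β (β x1)) hbb1 (β (β x3)) hbb3) (ρ (β x2) (β x5) (f (α x4)))
    have H55 := LinearMap.congr_fun (hrep.ρskew i1 i3 (β (β x1)) hbb1 (β (β x3)) hbb3) (ρ (β x4) (β x2) (f (α x5)))
    have H56 := LinearMap.congr_fun (hrep.ρskew i1 i3 (β (β x1)) hbb1 (β (β x3)) hbb3) (ρ (β x4) (β x5) (f (α x2)))
    have H57 := LinearMap.congr_fun (hrep.ρskew i1 i3 (β (β x1)) hbb1 (β (β x3)) hbb3) (ρ (β x5) (β x2) (f (α x4)))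
    have H58 := LinearMap.congr_fun (hrep.ρskew i1 i4 (β (β x1)) hbb1 (β (β x4)) hbb4) (ρ (β x2) (β x3) (f (α x5)))
    have H59 := LinearMap.congr_fun (hrep.ρskew i1 i4 (β (β x1)) hbb1 (β (β x4)) hbb4) (ρ (β x2) (β x5) (f (α x3)))
    have H60 := LinearMap.congr_fun (hrep.ρskew i1 i4 (β (β x1)) hbb1 (β (β x4)) hbb4) (ρ (β x3) (β x5) (f (α x2)))
    have H61 := LinearMap.congr_fun (hrep.ρskew i1 i4 (β (β x1)) hbb1 (β (β x4)) hbb4) (ρ (β x5) (β x2) (f (α x3)))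
    have H62 := LinearMap.congr_fun (hrep.ρskew i1 i5 (β (β x1)) hbb1 (β (β x5)) hbb5) (ρ (β x2) (β x3) (f (α x4)))
    have H63 := LinearMap.congr_fun (hrep.ρskew i1 i5 (β (β x1)) hbb1 (β (β x5)) hbb5) (ρ (β x2) (β x4) (f (α x3)))
    have H64 := LinearMap.congr_fun (hrep.ρskew i1 i5 (β (β x1)) hbb1 (β (β x5)) hbb5) (ρ (β x4) (β x3) (f (α x2)))
    have H65 := LinearMap.congr_fun (hrep.ρskew i2 i3 (β (β x2)) hbb2 (β (β x3)) hbb3) (ρ (β x1) (β x4) (f (α x5)))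
    have H66 := LinearMap.congr_fun (hrep.ρskew i2 i3 (β (β x2)) hbb2 (β (β x3)) hbb3) (ρ (β x1) (β x5) (f (α x4)))
    have H67 := LinearMap.congr_fun (hrep.ρskew i2 i3 (β (β x2)) hbb2 (β (β x3)) hbb3) (ρ (β x4) (β x5) (f (α x1)))
    have H68 := LinearMap.congr_fun (hrep.ρskew i2 i4 (β (β x2)) hbb2 (β (β x4)) hbb4) (ρ (β x1) (β x5) (f (α x3)))
    have H69 := LinearMap.congr_fun (hrep.ρskew i2 i4 (β (β x2)) hbb2 (β (β x4)) hbb4) (ρ (β x3) (β x5) (f (α x1)))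
    have H70 := LinearMap.congr_fun (hrep.ρskew i2 i5 (β (β x2)) hbb2 (β (β x5)) hbb5) (ρ (β x4) (β x3) (f (α x1)))
    have H71 := LinearMap.congr_fun (hrep.ρskew i3 i4 (β (β x3)) hbb3 (β (β x4)) hbb4) (ρ (β x1) (β x5) (f (α x2)))
    have H72 := LinearMap.congr_fun (hrep.ρskew i3 i4 (β (β x3)) hbb3 (β (β x4)) hbb4) (ρ (β x2) (β x5) (f (α x1)))
    have hv2 : (2 : ZMod 2).val = 0 := rfl
    have hv3 : (3 : ZMod 2).val = 1 := rfl
    rw [hΘ i1 i2 (i3 + i4 + i5) (β (β x1)) hbb1 (β (β x2)) hbb2 (br (β x3) (β x4) (α x5)) hg345,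
      hΘ i3 i4 i5 (β x3) hb3 (β x4) hb4 (α x5) ha5,
      hΘ i4 i5 (i1 + i2 + i3) (β (β x4)) hbb4 (β (β x5)) hbb5 (br (β x1) (β x2) (α x3)) hg123,
      hΘ i1 i2 i3 (β x1) hb1 (β x2) hb2 (α x3) ha3,
      hΘ i3 i5 (i1 + i2 + i4) (β (β x3)) hbb3 (β (β x5)) hbb5 (br (β x1) (β x2) (α x4)) hg124,
      hΘ i1 i2 i4 (β x1) hb1 (β x2) hb2 (α x4) ha4,
      hΘ i3 i4 (i1 + i2 + i5) (β (β x3)) hbb3 (β (β x4)) hbb4 (br (β x1) (β x2) (α x5)) hg125,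
      hΘ i1 i2 i5 (β x1) hb1 (β x2) hb2 (α x5) ha5]
    simp only [LinearMap.comp_apply, LinearMap.add_apply, LinearMap.smul_apply, LinearMap.sub_apply, map_add, map_sub, map_smul, smul_add, smul_sub, hfα', hfβ', hc1, hc2, hc3, hαi₁, hαi₂, hβi₁, hβi₂, habr, halg.mult_α, halg.mult_β, hrep.ρsmul₁, hrep.ρsmul₂] at H0 H1 H2 H3 H4 H5 H6 H7 H8 H9 H10 H11 H12 H13 H14 H15 H16 H17 H18 H19 H20 H21 H22 H23 H24 H25 H26 H27 H28 H29 H30 H31 H32 H33 H34 H35 H36 H37 H38 H39 H40 H41 H42 H43 H44 H45 H46 H47 H48 H49 H50 H51 H52 H53 H54 H55 H56 H57 H58 H59 H60 H61 H62 H63 H64 H65 H66 H67 H68 H69 H70 H71 H72 ⊢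
    linear_combination (norm := match_scalars <;>
        (first
          | ring1
          | (rcases htwo i1 with h1 | h1 <;> rcases htwo i2 with h2 | h2 <;>
             rcases htwo i3 with h3 | h3 <;> rcases htwo i4 with h4 | h4 <;>
             rcases htwo i5 with h5 | h5 <;>
             norm_num [h1, h2, h3, h4, h5, hv2, hv3, ZMod.val_add, ZMod.val_one, ZMod.val_zero])))
      ((-1 : 𝕜) ^ (i2.val * i4.val + i2.val * i3.val)) • H0 +
    ((-1 : 𝕜) ^ (1 + i4.val * i5.val + i2.val * i5.val + i2.val * i3.val)) • H1 +
    ((-1 : 𝕜) ^ (i3.val * i5.val + i3.val * i4.val + i2.val * i5.val + i2.val * i4.val)) • H2 +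
    ((-1 : 𝕜) ^ (1 + i2.val * i4.val + i2.val * i3.val)) • H3 +
    ((-1 : 𝕜) ^ (i4.val * i5.val + i2.val * i5.val + i2.val * i3.val)) • H4 +
    ((-1 : 𝕜) ^ (1 + i3.val * i5.val + i3.val * i4.val + i2.val * i5.val + i2.val * i4.val)) • H5 +
    ((-1 : 𝕜) ^ (1 + i3.val * i5.val + i3.val * i4.val + i2.val * i5.val + i2.val * i4.val + i2.val * i3.val)) • H6 +
    ((-1 : 𝕜) ^ (i3.val * i5.val + i3.val * i4.val + i1.val * i5.val + i1.val * i4.val + i1.val * i3.val + i1.val * i2.val)) • H7 +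
    H8 +
    (-1 : 𝕜) • H9 +
    ((-1 : 𝕜) ^ (i4.val * i5.val)) • H10 +
    ((-1 : 𝕜) ^ (i3.val * i4.val)) • H11 +
    ((-1 : 𝕜) ^ (1 + i3.val * i5.val + i3.val * i4.val)) • H12 +
    ((-1 : 𝕜) ^ (1 + i4.val * i5.val + i3.val * i5.val)) • H13 +
    ((-1 : 𝕜) ^ (i4.val * i5.val + i3.val * i5.val + i3.val * i4.val)) • H14 +
    ((-1 : 𝕜) ^ (1 + i2.val * i3.val)) • H15 +
    ((-1 : 𝕜) ^ (i4.val * i5.val + i2.val * i3.val)) • H16 +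
    ((-1 : 𝕜) ^ (1 + i3.val * i5.val + i3.val * i4.val + i2.val * i4.val)) • H17 +
    ((-1 : 𝕜) ^ (1 + i3.val * i4.val + i2.val * i5.val + i2.val * i4.val + i2.val * i3.val)) • H18 +
    ((-1 : 𝕜) ^ (i3.val * i4.val + i1.val * i5.val + i1.val * i4.val + i1.val * i3.val + i1.val * i2.val)) • H19 +
    ((-1 : 𝕜) ^ (1 + i2.val * i5.val + i2.val * i4.val + i2.val * i3.val + i1.val * i4.val + i1.val * i3.val)) • H20 +
    ((-1 : 𝕜) ^ (i2.val * i4.val + i2.val * i3.val + i1.val * i5.val + i1.val * i4.val + i1.val * i3.val + i1.val * i2.val)) • H21 +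
    (-1 : 𝕜) • H22 +
    ((-1 : 𝕜) ^ (i4.val * i5.val)) • H23 +
    ((-1 : 𝕜) ^ (i3.val * i4.val)) • H24 +
    ((-1 : 𝕜) ^ (1 + i3.val * i5.val + i3.val * i4.val)) • H25 +
    ((-1 : 𝕜) ^ (1 + i4.val * i5.val + i3.val * i5.val)) • H26 +
    ((-1 : 𝕜) ^ (i4.val * i5.val + i3.val * i5.val + i3.val * i4.val)) • H27 +
    ((-1 : 𝕜) ^ (1 + i2.val * i3.val)) • H28 +
    ((-1 : 𝕜) ^ (i4.val * i5.val + i2.val * i3.val)) • H29 +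
    ((-1 : 𝕜) ^ (1 + i3.val * i5.val + i3.val * i4.val + i2.val * i4.val)) • H30 +
    ((-1 : 𝕜) ^ (1 + i3.val * i4.val + i2.val * i4.val + i2.val * i3.val)) • H31 +
    ((-1 : 𝕜) ^ (1 + i3.val * i4.val + i2.val * i5.val + i2.val * i4.val + i2.val * i3.val)) • H32 +
    ((-1 : 𝕜) ^ (i3.val * i5.val + i3.val * i4.val + i2.val * i5.val + i2.val * i4.val + i2.val * i3.val)) • H33 +
    ((-1 : 𝕜) ^ (i4.val * i5.val + i3.val * i5.val + i2.val * i5.val + i2.val * i3.val)) • H34 +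
    ((-1 : 𝕜) ^ (1 + i4.val * i5.val + i3.val * i5.val + i3.val * i4.val + i2.val * i5.val + i2.val * i4.val)) • H35 +
    ((-1 : 𝕜) ^ (i3.val * i4.val + i1.val * i5.val + i1.val * i4.val + i1.val * i3.val + i1.val * i2.val)) • H36 +
    ((-1 : 𝕜) ^ (1 + i3.val * i5.val + i3.val * i4.val + i1.val * i5.val + i1.val * i4.val + i1.val * i3.val + i1.val * i2.val)) • H37 +
    ((-1 : 𝕜) ^ (1 + i2.val * i5.val + i2.val * i4.val + i2.val * i3.val + i1.val * i4.val + i1.val * i3.val)) • H38 +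
    ((-1 : 𝕜) ^ (i2.val * i4.val + i2.val * i3.val + i1.val * i5.val + i1.val * i4.val + i1.val * i3.val + i1.val * i2.val)) • H39 +
    ((-1 : 𝕜) ^ (i2.val * i3.val)) • H40 +
    ((-1 : 𝕜) ^ (1 + i4.val * i5.val + i2.val * i3.val)) • H41 +
    ((-1 : 𝕜) ^ (1 + i3.val * i4.val + i2.val * i4.val)) • H42 +
    ((-1 : 𝕜) ^ (i3.val * i5.val + i3.val * i4.val + i2.val * i4.val)) • H43 +
    ((-1 : 𝕜) ^ (i3.val * i4.val + i2.val * i5.val + i2.val * i4.val + i2.val * i3.val)) • H44 +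
    ((-1 : 𝕜) ^ (i4.val * i5.val + i3.val * i5.val + i2.val * i5.val)) • H45 +
    ((-1 : 𝕜) ^ (1 + i4.val * i5.val + i3.val * i5.val + i3.val * i4.val + i2.val * i5.val)) • H46 +
    ((-1 : 𝕜) ^ (1 + i4.val * i5.val + i3.val * i5.val + i2.val * i5.val + i2.val * i4.val + i2.val * i3.val)) • H47 +
    ((-1 : 𝕜) ^ (1 + i3.val * i4.val + i1.val * i5.val + i1.val * i4.val + i1.val * i3.val + i1.val * i2.val)) • H48 +
    ((-1 : 𝕜) ^ (i4.val * i5.val + i3.val * i5.val + i1.val * i5.val + i1.val * i4.val + i1.val * i3.val + i1.val * i2.val)) • H49 +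
    (-1 : 𝕜) • H50 +
    ((-1 : 𝕜) ^ (i4.val * i5.val)) • H51 +
    ((-1 : 𝕜) ^ (1 + i3.val * i5.val + i3.val * i4.val)) • H52 +
    ((-1 : 𝕜) ^ (1 + i2.val * i3.val)) • H53 +
    ((-1 : 𝕜) ^ (i4.val * i5.val + i2.val * i3.val)) • H54 +
    ((-1 : 𝕜) ^ (1 + i2.val * i4.val + i2.val * i3.val)) • H55 +
    ((-1 : 𝕜) ^ (1 + i2.val * i5.val + i2.val * i4.val + i2.val * i3.val)) • H56 +
    ((-1 : 𝕜) ^ (i4.val * i5.val + i2.val * i5.val + i2.val * i3.val)) • H57 +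
    ((-1 : 𝕜) ^ (i3.val * i4.val + i2.val * i4.val)) • H58 +
    ((-1 : 𝕜) ^ (1 + i3.val * i5.val + i3.val * i4.val + i2.val * i4.val)) • H59 +
    ((-1 : 𝕜) ^ (1 + i3.val * i4.val + i2.val * i5.val + i2.val * i4.val + i2.val * i3.val)) • H60 +
    ((-1 : 𝕜) ^ (1 + i3.val * i5.val + i3.val * i4.val + i2.val * i5.val + i2.val * i4.val)) • H61 +
    ((-1 : 𝕜) ^ (1 + i4.val * i5.val + i3.val * i5.val + i2.val * i5.val)) • H62 +
    ((-1 : 𝕜) ^ (i4.val * i5.val + i3.val * i5.val + i3.val * i4.val + i2.val * i5.val)) • H63 +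
    ((-1 : 𝕜) ^ (i4.val * i5.val + i3.val * i5.val + i3.val * i4.val + i2.val * i5.val + i2.val * i4.val + i2.val * i3.val)) • H64 +
    ((-1 : 𝕜) ^ (1 + i1.val * i3.val + i1.val * i2.val)) • H65 +
    ((-1 : 𝕜) ^ (i4.val * i5.val + i1.val * i3.val + i1.val * i2.val)) • H66 +
    ((-1 : 𝕜) ^ (i1.val * i5.val + i1.val * i4.val + i1.val * i3.val + i1.val * i2.val)) • H67 +
    ((-1 : 𝕜) ^ (1 + i3.val * i5.val + i3.val * i4.val + i1.val * i4.val + i1.val * i2.val)) • H68 +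
    ((-1 : 𝕜) ^ (i3.val * i4.val + i1.val * i5.val + i1.val * i4.val + i1.val * i3.val + i1.val * i2.val)) • H69 +
    ((-1 : 𝕜) ^ (1 + i4.val * i5.val + i3.val * i5.val + i3.val * i4.val + i1.val * i5.val + i1.val * i4.val + i1.val * i3.val + i1.val * i2.val)) • H70 +
    ((-1 : 𝕜) ^ (1 + i2.val * i5.val + i2.val * i4.val + i2.val * i3.val + i1.val * i4.val + i1.val * i3.val)) • H71 +
    ((-1 : 𝕜) ^ (i2.val * i4.val + i2.val * i3.val + i1.val * i5.val + i1.val * i4.val + i1.val * i3.val + i1.val * i2.val)) • H72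
end

section
/- Under the assumptions that θ is a 3-cocycle and θ_f is the coboundary-type 3-cocycle associated to an even linear map f : g → M (with f∘α = α_M∘f, f∘β = β_M∘f), the map σ : T_θ(g) → T_{θ+θ_f}(g) defined by σ(v + x) = v + f(v) + x for v ∈ g, x ∈ M is an isomorphism of 3-BiHom-Lie superalgebras. -/
/-- The map `σ(v + x) = v + f(v) + x` on `g ⊕ M`, as a linear map. -/
noncomputable def sigmaMap (𝕜 : Type*) [Field 𝕜] {V M : Type*} [AddCommGroup V] [Module 𝕜 V]
    [AddCommGroup M] [Module 𝕜 M] (f : V →ₗ[𝕜] M) : V × M →ₗ[𝕜] V × M :=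
  (LinearMap.fst 𝕜 V M).prod (f ∘ₗ LinearMap.fst 𝕜 V M + LinearMap.snd 𝕜 V M)

/-- Given a 3-cocycle `θ`, an even equivariant linear map `f : g → M` with associated
coboundary-type 3-cocycle `θ_f` (here `Θf`), and the `T_θ`- and `T_{θ+θ_f}`-extension
brackets `Br₁` and `Br₂` on `g ⊕ M`, the map `σ(v + x) = v + f(v) + x` is an isomorphism
of 3-BiHom-Lie superalgebras `T_θ(g) → T_{θ+θ_f}(g)`. -/
theorem statement12 {𝕜 V M : Type*} [Field 𝕜] [AddCommGroup V] [Module 𝕜 V]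
    [AddCommGroup M] [Module 𝕜 M]
    (G : ZMod 2 → Submodule 𝕜 V) (br : V → V → V → V) (α β : V →ₗ[𝕜] V)
    (GM : ZMod 2 → Submodule 𝕜 M) (ρ : V → V → M →ₗ[𝕜] M) (αM βM : M →ₗ[𝕜] M)
    (θ : V → V → V → M)
    (halg : Is3BiHomLieSuper 𝕜 G br α β)
    (hrep : IsRep3 𝕜 G br α β GM ρ αM βM)
    (hcoc : Is3Cocycle 𝕜 G br α β GM ρ αM βM θ)
    (αi : V →ₗ[𝕜] V) (hαi₁ : ∀ x, α (αi x) = x) (hαi₂ : ∀ x, αi (α x) = x)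
    (βi : V →ₗ[𝕜] V) (hβi₁ : ∀ x, β (βi x) = x) (hβi₂ : ∀ x, βi (β x) = x)
    (βMi : M →ₗ[𝕜] M) (hβMi₁ : ∀ m, βM (βMi m) = m) (hβMi₂ : ∀ m, βMi (βM m) = m)
    (f : V →ₗ[𝕜] M)
    (hfe : ∀ i, ∀ x ∈ G i, f x ∈ GM i)
    (hfα : ∀ x, f (α x) = αM (f x)) (hfβ : ∀ x, f (β x) = βM (f x))
    -- the coboundary-type 3-cocycle θ_f
    (Θf : V → V → V → M)
    (hΘadd₁ : ∀ x x' y z, Θf (x + x') y z = Θf x y z + Θf x' y z)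
    (hΘsmul₁ : ∀ (c : 𝕜) x y z, Θf (c • x) y z = c • Θf x y z)
    (hΘadd₂ : ∀ x y y' z, Θf x (y + y') z = Θf x y z + Θf x y' z)
    (hΘsmul₂ : ∀ (c : 𝕜) x y z, Θf x (c • y) z = c • Θf x y z)
    (hΘadd₃ : ∀ x y z z', Θf x y (z + z') = Θf x y z + Θf x y z')
    (hΘsmul₃ : ∀ (c : 𝕜) x y z, Θf x y (c • z) = c • Θf x y z)
    (hΘf : ∀ (i j k : ZMod 2), ∀ x ∈ G i, ∀ y ∈ G j, ∀ z ∈ G k,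
      Θf x y z =
        f (br x y z) - ρ x y (f z) +
          (-1 : 𝕜) ^ (j.val * k.val) • ρ x (αi (β z)) (f (α (βi y))) -
          (-1 : 𝕜) ^ ((j.val + k.val) * i.val) • ρ y (αi (β z)) (f (α (βi x))))
    -- the T_θ-extension bracket
    (Br₁ : V × M → V × M → V × M → V × M)
    (h₁add₁ : ∀ p p' q r, Br₁ (p + p') q r = Br₁ p q r + Br₁ p' q r)
    (h₁smul₁ : ∀ (c : 𝕜) p q r, Br₁ (c • p) q r = c • Br₁ p q r)
    (h₁add₂ : ∀ p q q' r, Br₁ p (q + q') r = Br₁ p q r + Br₁ p q' r)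
    (h₁smul₂ : ∀ (c : 𝕜) p q r, Br₁ p (c • q) r = c • Br₁ p q r)
    (h₁add₃ : ∀ p q r r', Br₁ p q (r + r') = Br₁ p q r + Br₁ p q r')
    (h₁smul₃ : ∀ (c : 𝕜) p q r, Br₁ p q (c • r) = c • Br₁ p q r)
    (hBr₁ : ∀ (i j k : ZMod 2) (u v w : V) (x y z : M),
      u ∈ G i → x ∈ GM i → v ∈ G j → y ∈ GM j → w ∈ G k → z ∈ GM k →
      Br₁ (u, x) (v, y) (w, z) =
        (br u v w,
          θ u v w + ρ u v z - (-1 : 𝕜) ^ (j.val * k.val) • ρ u (αi (β w)) (αM (βMi y)) +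
            (-1 : 𝕜) ^ (i.val * (j.val + k.val)) • ρ v (αi (β w)) (αM (βMi x))))
    -- the T_{θ+θ_f}-extension bracket
    (Br₂ : V × M → V × M → V × M → V × M)
    (h₂add₁ : ∀ p p' q r, Br₂ (p + p') q r = Br₂ p q r + Br₂ p' q r)
    (h₂smul₁ : ∀ (c : 𝕜) p q r, Br₂ (c • p) q r = c • Br₂ p q r)
    (h₂add₂ : ∀ p q q' r, Br₂ p (q + q') r = Br₂ p q r + Br₂ p q' r)
    (h₂smul₂ : ∀ (c : 𝕜) p q r, Br₂ p (c • q) r = c • Br₂ p q r)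
    (h₂add₃ : ∀ p q r r', Br₂ p q (r + r') = Br₂ p q r + Br₂ p q r')
    (h₂smul₃ : ∀ (c : 𝕜) p q r, Br₂ p q (c • r) = c • Br₂ p q r)
    (hBr₂ : ∀ (i j k : ZMod 2) (u v w : V) (x y z : M),
      u ∈ G i → x ∈ GM i → v ∈ G j → y ∈ GM j → w ∈ G k → z ∈ GM k →
      Br₂ (u, x) (v, y) (w, z) =
        (br u v w,
          (θ u v w + Θf u v w) + ρ u v z -
            (-1 : 𝕜) ^ (j.val * k.val) • ρ u (αi (β w)) (αM (βMi y)) +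
            (-1 : 𝕜) ^ (i.val * (j.val + k.val)) • ρ v (αi (β w)) (αM (βMi x)))) :
    Function.Bijective (sigmaMap 𝕜 f) ∧
    (∀ p q r, sigmaMap 𝕜 f (Br₁ p q r) = Br₂ (sigmaMap 𝕜 f p) (sigmaMap 𝕜 f q) (sigmaMap 𝕜 f r)) ∧
    (∀ p, sigmaMap 𝕜 f ((α.prodMap αM) p) = (α.prodMap αM) (sigmaMap 𝕜 f p)) ∧
    (∀ p, sigmaMap 𝕜 f ((β.prodMap βM) p) = (β.prodMap βM) (sigmaMap 𝕜 f p)) := by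
  have hσ_apply : ∀ (v : V) (x : M), sigmaMap 𝕜 f (v, x) = (v, f v + x) := by
    intro v x; simp [sigmaMap]
  have hfβi : ∀ v, βMi (f v) = f (βi v) := by
    intro v
    have h1 : f v = βM (f (βi v)) := by rw [← hfβ, hβi₁]
    rw [h1, hβMi₂]
  have hfkey : ∀ v, αM (βMi (f v)) = f (α (βi v)) := by
    intro v; rw [hfβi, hfα]
  -- key homogeneous case
  have key : ∀ (i j k : ZMod 2) (a b c : V × M),
      a.1 ∈ G i → a.2 ∈ GM i → b.1 ∈ G j → b.2 ∈ GM j → c.1 ∈ G k → c.2 ∈ GM k →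
      sigmaMap 𝕜 f (Br₁ a b c) =
        Br₂ (sigmaMap 𝕜 f a) (sigmaMap 𝕜 f b) (sigmaMap 𝕜 f c) := by
    intro i j k a b c hu hx hv hy hw hz
    obtain ⟨u, x⟩ := a; obtain ⟨v, y⟩ := b; obtain ⟨w, z⟩ := c
    simp only at hu hx hv hy hw hz
    rw [hBr₁ i j k u v w x y z hu hx hv hy hw hz, hσ_apply, hσ_apply, hσ_apply, hσ_apply,
      hBr₂ i j k u v w (f u + x) (f v + y) (f w + z) hu
        (Submodule.add_mem _ (hfe i u hu) hx) hv (Submodule.add_mem _ (hfe j v hv) hy)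
        hw (Submodule.add_mem _ (hfe k w hw) hz)]
    refine Prod.ext rfl ?_
    simp only
    rw [hΘf i j k u hu v hv w hw, ← hfkey, ← hfkey]
    simp only [map_add]
    module
  -- decomposition into homogeneous parts
  have hdecV : ∀ v : V, ∃ v₀ ∈ G 0, ∃ v₁ ∈ G 1, v = v₀ + v₁ := by
    intro v
    have : v ∈ G 0 ⊔ G 1 := by rw [halg.sup_top]; trivial
    obtain ⟨v₀, h₀, v₁, h₁, h⟩ := Submodule.mem_sup.mp this
    exact ⟨v₀, h₀, v₁, h₁, h.symm⟩
  have hdecM : ∀ m : M, ∃ m₀ ∈ GM 0, ∃ m₁ ∈ GM 1, m = m₀ + m₁ := by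
    intro m
    have : m ∈ GM 0 ⊔ GM 1 := by rw [hrep.supM]; trivial
    obtain ⟨m₀, h₀, m₁, h₁, h⟩ := Submodule.mem_sup.mp this
    exact ⟨m₀, h₀, m₁, h₁, h.symm⟩
  have hdec : ∀ p : V × M, ∃ a b : V × M,
      (a.1 ∈ G 0 ∧ a.2 ∈ GM 0) ∧ (b.1 ∈ G 1 ∧ b.2 ∈ GM 1) ∧ p = a + b := by
    intro ⟨v, m⟩
    obtain ⟨v₀, hv₀, v₁, hv₁, hv⟩ := hdecV v
    obtain ⟨m₀, hm₀, m₁, hm₁, hm⟩ := hdecM m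
    exact ⟨(v₀, m₀), (v₁, m₁), ⟨hv₀, hm₀⟩, ⟨hv₁, hm₁⟩, by simp [hv, hm, Prod.ext_iff]⟩
  refine ⟨?_, ?_, ?_, ?_⟩
  · -- bijective
    refine Function.bijective_iff_has_inverse.mpr ⟨fun p => (p.1, p.2 - f p.1), ?_, ?_⟩
    · intro ⟨v, x⟩; rw [hσ_apply]; simp
    · intro ⟨v, x⟩; rw [hσ_apply]; simp
  · -- bracket preservation
    intro p q r
    obtain ⟨pa, pb, ⟨hpa1, hpa2⟩, ⟨hpb1, hpb2⟩, rfl⟩ := hdec p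
    obtain ⟨qa, qb, ⟨hqa1, hqa2⟩, ⟨hqb1, hqb2⟩, rfl⟩ := hdec q
    obtain ⟨ra, rb, ⟨hra1, hra2⟩, ⟨hrb1, hrb2⟩, rfl⟩ := hdec r
    simp only [h₁add₁, h₁add₂, h₁add₃, map_add, h₂add₁, h₂add₂, h₂add₃]
    rw [key 0 0 0 pa qa ra hpa1 hpa2 hqa1 hqa2 hra1 hra2,
      key 0 0 1 pa qa rb hpa1 hpa2 hqa1 hqa2 hrb1 hrb2,
      key 0 1 0 pa qb ra hpa1 hpa2 hqb1 hqb2 hra1 hra2,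
      key 0 1 1 pa qb rb hpa1 hpa2 hqb1 hqb2 hrb1 hrb2,
      key 1 0 0 pb qa ra hpb1 hpb2 hqa1 hqa2 hra1 hra2,
      key 1 0 1 pb qa rb hpb1 hpb2 hqa1 hqa2 hrb1 hrb2,
      key 1 1 0 pb qb ra hpb1 hpb2 hqb1 hqb2 hra1 hra2,
      key 1 1 1 pb qb rb hpb1 hpb2 hqb1 hqb2 hrb1 hrb2]
  · intro ⟨v, x⟩
    simp [sigmaMap, hfα]
  · intro ⟨v, x⟩
    simp [sigmaMap, hfβ]
end

section
/- Let g be a 3-BiHom-Lie superalgebra that is solvable. Then the T_θ-extension g ⊕ g* (with bracket [·,·,·]_θ built from the coadjoint representation and a 3-cocycle θ) is solvable. -/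
/-- The span of all brackets `br x y z` with `x ∈ P`, `y ∈ Q`, `z ∈ R`. -/
def tripleSpan (𝕜 : Type*) [Field 𝕜] {V : Type*} [AddCommGroup V] [Module 𝕜 V]
    (br : V → V → V → V) (P Q R : Submodule 𝕜 V) : Submodule 𝕜 V :=
  Submodule.span 𝕜 {w : V | ∃ x ∈ P, ∃ y ∈ Q, ∃ z ∈ R, w = br x y z}

/-- Derived series: `g^{(0)} = g`, `g^{(n+1)} = [g^{(n)}, g^{(n)}, g]`. -/
def derivedSeries3 (𝕜 : Type*) [Field 𝕜] {V : Type*} [AddCommGroup V] [Module 𝕜 V]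
    (br : V → V → V → V) : ℕ → Submodule 𝕜 V
  | 0 => ⊤
  | n + 1 => tripleSpan 𝕜 br (derivedSeries3 𝕜 br n) (derivedSeries3 𝕜 br n) ⊤

/-- Central descending series: `g^0 = g`, `g^{n+1} = [g^n, g, g]`. -/
def lowerSeries3 (𝕜 : Type*) [Field 𝕜] {V : Type*} [AddCommGroup V] [Module 𝕜 V]
    (br : V → V → V → V) : ℕ → Submodule 𝕜 V
  | 0 => ⊤
  | n + 1 => tripleSpan 𝕜 br (lowerSeries3 𝕜 br n) ⊤ ⊤

/-- If the 3-BiHom-Lie superalgebra `g` is solvable, then its `T_θ`-extension `g ⊕ g*`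
(with bracket built from the coadjoint representation `ad*` and a 3-cocycle `θ`) is solvable. -/
theorem statement14 {𝕜 V : Type*} [Field 𝕜] [AddCommGroup V] [Module 𝕜 V]
    (G : ZMod 2 → Submodule 𝕜 V) (br : V → V → V → V) (α β : V →ₗ[𝕜] V)
    (halg : Is3BiHomLieSuper 𝕜 G br α β)
    (αi : V →ₗ[𝕜] V) (hαi₁ : ∀ x, α (αi x) = x) (hαi₂ : ∀ x, αi (α x) = x)
    (βi : V →ₗ[𝕜] V) (hβi₁ : ∀ x, β (βi x) = x) (hβi₂ : ∀ x, βi (β x) = x)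
    -- the coadjoint representation on g*
    (ρ : V → V → Module.Dual 𝕜 V →ₗ[𝕜] Module.Dual 𝕜 V)
    (hρadd₁ : ∀ x x' y, ρ (x + x') y = ρ x y + ρ x' y)
    (hρsmul₁ : ∀ (c : 𝕜) x y, ρ (c • x) y = c • ρ x y)
    (hρadd₂ : ∀ x y y', ρ x (y + y') = ρ x y + ρ x y')
    (hρsmul₂ : ∀ (c : 𝕜) x y, ρ x (c • y) = c • ρ x y)
    (hρ : ∀ (i j d : ZMod 2), ∀ x ∈ G i, ∀ y ∈ G j,
      ∀ h ∈ (G (d + 1)).dualAnnihilator, ∀ z : V,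
      ρ x y h z = -((-1 : 𝕜) ^ (d.val * (i.val + j.val))) * h (br x y z))
    -- a 3-cocycle with values in g*
    (θ : V → V → V → Module.Dual 𝕜 V)
    (hcoc : Is3Cocycle 𝕜 G br α β (fun d => (G (d + 1)).dualAnnihilator) ρ
      α.dualMap β.dualMap θ)
    -- the T_θ-extension bracket on g ⊕ g*
    (Br : V × Module.Dual 𝕜 V → V × Module.Dual 𝕜 V → V × Module.Dual 𝕜 V →
      V × Module.Dual 𝕜 V)
    (hadd₁ : ∀ p p' q r, Br (p + p') q r = Br p q r + Br p' q r)
    (hsmul₁ : ∀ (c : 𝕜) p q r, Br (c • p) q r = c • Br p q r)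
    (hadd₂ : ∀ p q q' r, Br p (q + q') r = Br p q r + Br p q' r)
    (hsmul₂ : ∀ (c : 𝕜) p q r, Br p (c • q) r = c • Br p q r)
    (hadd₃ : ∀ p q r r', Br p q (r + r') = Br p q r + Br p q r')
    (hsmul₃ : ∀ (c : 𝕜) p q r, Br p q (c • r) = c • Br p q r)
    (hBr : ∀ (i j k : ZMod 2) (u v w : V) (x y z : Module.Dual 𝕜 V),
      u ∈ G i → x ∈ (G (i + 1)).dualAnnihilator →
      v ∈ G j → y ∈ (G (j + 1)).dualAnnihilator →
      w ∈ G k → z ∈ (G (k + 1)).dualAnnihilator →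
      Br (u, x) (v, y) (w, z) =
        (br u v w,
          θ u v w + ρ u v z -
            (-1 : 𝕜) ^ (j.val * k.val) • ρ u (αi (β w)) (α.dualMap (βi.dualMap y)) +
            (-1 : 𝕜) ^ (i.val * (j.val + k.val)) • ρ v (αi (β w)) (α.dualMap (βi.dualMap x))))
    (hsolv : ∃ k, derivedSeries3 𝕜 br k = ⊥) :
    ∃ k, derivedSeries3 𝕜 Br k = ⊥ := by
  classical
  -- zero lemmas
  have br0₁ : ∀ y z : V, br 0 y z = 0 := fun y z => by
    rw [← zero_smul 𝕜 (0 : V), halg.smul₁]; simp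
  have θ0₁ : ∀ y z : V, θ 0 y z = 0 := fun y z => by
    rw [← zero_smul 𝕜 (0 : V), hcoc.θsmul₁]; simp
  have ρ0₁ : ∀ y : V, ρ 0 y = 0 := fun y => by
    rw [← zero_smul 𝕜 (0 : V), hρsmul₁]; simp
  have hcompl : IsCompl (G 0) (G 1) :=
    ⟨disjoint_iff.2 halg.inf_bot, codisjoint_iff.2 halg.sup_top⟩
  -- decomposition of the dual
  have ddecomp : ∀ f : Module.Dual 𝕜 V, ∃ f0 f1 : Module.Dual 𝕜 V,
      f = f0 + f1 ∧ f0 ∈ (G ((0:ZMod 2)+1)).dualAnnihilator ∧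
      f1 ∈ (G ((1:ZMod 2)+1)).dualAnnihilator := by
    intro f
    set π := Submodule.linearProjOfIsCompl (G 0) (G 1) hcompl with hπ
    refine ⟨f ∘ₗ ((G 0).subtype ∘ₗ π), f - f ∘ₗ ((G 0).subtype ∘ₗ π), by abel, ?_, ?_⟩
    · rw [Submodule.mem_dualAnnihilator]
      intro w hw
      have : π w = 0 := Submodule.linearProjOfIsCompl_apply_right hcompl ⟨w, hw⟩
      simp [this]
    · rw [Submodule.mem_dualAnnihilator]
      intro w hw
      have : π w = ⟨w, hw⟩ := Submodule.linearProjOfIsCompl_apply_left hcompl ⟨w, hw⟩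
      simp [this]
  -- decomposition of V × Dual into two homogeneous pieces
  have decomp : ∀ p : V × Module.Dual 𝕜 V, ∃ (u0 u1 : V) (x0 x1 : Module.Dual 𝕜 V),
      p = (u0, x0) + (u1, x1) ∧ u0 ∈ G 0 ∧ x0 ∈ (G ((0:ZMod 2)+1)).dualAnnihilator ∧
      u1 ∈ G 1 ∧ x1 ∈ (G ((1:ZMod 2)+1)).dualAnnihilator := by
    intro p
    have hp1 : p.1 ∈ G 0 ⊔ G 1 := halg.sup_top ▸ Submodule.mem_top
    obtain ⟨u0, hu0, u1, hu1, hu⟩ := Submodule.mem_sup.1 hp1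
    obtain ⟨x0, x1, hx, hx0, hx1⟩ := ddecomp p.2
    exact ⟨u0, u1, x0, x1, by rw [Prod.ext_iff]; exact ⟨by simp [← hu], by simp [hx]⟩,
      hu0, hx0, hu1, hx1⟩
  -- first component of the extension bracket
  have fstBr : ∀ p q r, (Br p q r).1 = br p.1 q.1 r.1 := by
    intro p q r
    obtain ⟨u0, u1, x0, x1, hp, hu0, hx0, hu1, hx1⟩ := decomp p
    obtain ⟨v0, v1, y0, y1, hq, hv0, hy0, hv1, hy1⟩ := decomp q
    obtain ⟨w0, w1, z0, z1, hr, hw0, hz0, hw1, hz1⟩ := decomp r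
    rw [hp, hq, hr]
    simp only [hadd₁, hadd₂, hadd₃,
      hBr 0 0 0 u0 v0 w0 x0 y0 z0 hu0 hx0 hv0 hy0 hw0 hz0,
      hBr 0 0 1 u0 v0 w1 x0 y0 z1 hu0 hx0 hv0 hy0 hw1 hz1,
      hBr 0 1 0 u0 v1 w0 x0 y1 z0 hu0 hx0 hv1 hy1 hw0 hz0,
      hBr 0 1 1 u0 v1 w1 x0 y1 z1 hu0 hx0 hv1 hy1 hw1 hz1,
      hBr 1 0 0 u1 v0 w0 x1 y0 z0 hu1 hx1 hv0 hy0 hw0 hz0,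
      hBr 1 0 1 u1 v0 w1 x1 y0 z1 hu1 hx1 hv0 hy0 hw1 hz1,
      hBr 1 1 0 u1 v1 w0 x1 y1 z0 hu1 hx1 hv1 hy1 hw0 hz0,
      hBr 1 1 1 u1 v1 w1 x1 y1 z1 hu1 hx1 hv1 hy1 hw1 hz1,
      Prod.fst_add, halg.add₁, halg.add₂, halg.add₃]
  -- Br vanishes when the first two arguments have zero V-component
  have BrZero : ∀ (x y : Module.Dual 𝕜 V) (r : V × Module.Dual 𝕜 V),
      Br (0, x) (0, y) r = 0 := by
    intro x y r
    obtain ⟨x0, x1, hx, hx0, hx1⟩ := ddecomp x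
    obtain ⟨y0, y1, hy, hy0, hy1⟩ := ddecomp y
    obtain ⟨w0, w1, z0, z1, hr, hw0, hz0, hw1, hz1⟩ := decomp r
    have ex : ((0 : V), x) = ((0 : V), x0) + ((0 : V), x1) := by
      rw [Prod.ext_iff]; exact ⟨by simp, by simp [hx]⟩
    have ey : ((0 : V), y) = ((0 : V), y0) + ((0 : V), y1) := by
      rw [Prod.ext_iff]; exact ⟨by simp, by simp [hy]⟩
    rw [ex, ey, hr]
    simp only [hadd₁, hadd₂, hadd₃,
      hBr 0 0 0 0 0 w0 x0 y0 z0 (zero_mem _) hx0 (zero_mem _) hy0 hw0 hz0,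
      hBr 0 0 1 0 0 w1 x0 y0 z1 (zero_mem _) hx0 (zero_mem _) hy0 hw1 hz1,
      hBr 0 1 0 0 0 w0 x0 y1 z0 (zero_mem _) hx0 (zero_mem _) hy1 hw0 hz0,
      hBr 0 1 1 0 0 w1 x0 y1 z1 (zero_mem _) hx0 (zero_mem _) hy1 hw1 hz1,
      hBr 1 0 0 0 0 w0 x1 y0 z0 (zero_mem _) hx1 (zero_mem _) hy0 hw0 hz0,
      hBr 1 0 1 0 0 w1 x1 y0 z1 (zero_mem _) hx1 (zero_mem _) hy0 hw1 hz1,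
      hBr 1 1 0 0 0 w0 x1 y1 z0 (zero_mem _) hx1 (zero_mem _) hy1 hw0 hz0,
      hBr 1 1 1 0 0 w1 x1 y1 z1 (zero_mem _) hx1 (zero_mem _) hy1 hw1 hz1,
      br0₁, θ0₁, ρ0₁, LinearMap.zero_apply, smul_zero, add_zero, zero_add, sub_zero,
      Prod.mk_zero_zero]
  -- derived series comparison
  have key : ∀ n, derivedSeries3 𝕜 Br n ≤ (derivedSeries3 𝕜 br n).prod ⊤ := by
    intro n
    induction n with
    | zero =>
      intro p _
      exact Submodule.mem_prod.2 ⟨Submodule.mem_top, Submodule.mem_top⟩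
    | succ n ih =>
      show tripleSpan 𝕜 Br (derivedSeries3 𝕜 Br n) (derivedSeries3 𝕜 Br n) ⊤ ≤ _
      refine Submodule.span_le.2 ?_
      rintro w ⟨p, hp, q, hq, r, -, rfl⟩
      refine Submodule.mem_prod.2 ⟨?_, Submodule.mem_top⟩
      rw [fstBr]
      exact Submodule.subset_span
        ⟨p.1, (Submodule.mem_prod.1 (ih hp)).1, q.1, (Submodule.mem_prod.1 (ih hq)).1,
          r.1, Submodule.mem_top, rfl⟩
  obtain ⟨s, hs⟩ := hsolv
  refine ⟨s + 1, le_bot_iff.1 ?_⟩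
  show tripleSpan 𝕜 Br (derivedSeries3 𝕜 Br s) (derivedSeries3 𝕜 Br s) ⊤ ≤ ⊥
  refine Submodule.span_le.2 ?_
  rintro w ⟨p, hp, q, hq, r, -, rfl⟩
  have hp1 : p.1 = 0 := by
    have := (Submodule.mem_prod.1 (key s hp)).1
    rw [hs] at this
    simpa using this
  have hq1 : q.1 = 0 := by
    have := (Submodule.mem_prod.1 (key s hq)).1
    rw [hs] at this
    simpa using this
  have ep : p = ((0 : V), p.2) := by rw [Prod.ext_iff]; exact ⟨hp1, rfl⟩
  have eq' : q = ((0 : V), q.2) := by rw [Prod.ext_iff]; exact ⟨hq1, rfl⟩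
  rw [SetLike.mem_coe, ep, eq', BrZero]
  exact zero_mem _
end
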